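/- arXiv:1705.06797 — 4 statements merged into one kernel-verified Lean document; each statement's English description precedes it below -/
import Mathlib

section
/- Let Y be a Banach space containing a normalized sequence (y_n) such that for all k ≥ 1, all k ≤ n_1 < ... < n_k and all scalars (a_i), (1/(1+ν)) max|a_i| ≤ ‖Σ a_i y_{n_i}‖ ≤ (1+ν) max|a_i|. Then for every k ∈ ℕ there is a map f_k from the countably branching tree T_k^ω = ([ℕ]^{≤k}, d_T) of height k into Y with (1/(2(1+ν))) d_T(x,y) ≤ ‖f_k(x) − f_k(y)‖ ≤ d_T(x,y) for all vertices x, y; in particular the trees (T_k^ω)_{k≥1} equi-bi-Lipschitzly embed into Y. -/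
/-- Length of the longest common prefix of two lists. -/
def lcp : List ℕ → List ℕ → ℕ
  | a :: s, b :: t => if a = b then lcp s t + 1 else 0
  | _, _ => 0

/-- The tree distance `d_T(m,n) = |m| + |n| - 2|m ∧ n|` on finite subsets of `ℕ`. -/
def dT (m n : Finset ℕ) : ℕ :=
  m.card + n.card - 2 * lcp (m.sort (· ≤ ·)) (n.sort (· ≤ ·))

namespace TreeEmbedAux

open Finset List

theorem lcp_nil_left (t : List ℕ) : lcp [] t = 0 := by cases t <;> rfl

theorem lcp_nil_right (s : List ℕ) : lcp s [] = 0 := by cases s <;> rfl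

theorem lcp_cons (a b : ℕ) (s t : List ℕ) :
    lcp (a :: s) (b :: t) = if a = b then lcp s t + 1 else 0 := rfl

theorem lcp_comm (s : List ℕ) : ∀ t, lcp s t = lcp t s := by
  induction s with
  | nil => intro t; rw [lcp_nil_left, lcp_nil_right]
  | cons a s ih =>
    intro t
    cases t with
    | nil => rw [lcp_nil_left, lcp_nil_right]
    | cons b t =>
      rw [lcp_cons, lcp_cons, ih t]
      by_cases h : a = b
      · simp [h]
      · rw [if_neg h, if_neg (fun hh => h hh.symm)]

theorem lcp_le_left (s : List ℕ) : ∀ t, lcp s t ≤ s.length := by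
  induction s with
  | nil => intro t; rw [lcp_nil_left]; simp
  | cons a s ih =>
    intro t
    cases t with
    | nil => rw [lcp_nil_right]; simp
    | cons b t =>
      rw [lcp_cons]
      by_cases h : a = b
      · simpa [h] using ih t
      · simp [h]

theorem lcp_le_right (s t : List ℕ) : lcp s t ≤ t.length := by
  rw [lcp_comm]; exact lcp_le_left t s

theorem take_lcp_eq (s : List ℕ) : ∀ t, s.take (lcp s t) = t.take (lcp s t) := by
  induction s with
  | nil => intro t; rw [lcp_nil_left]; simp
  | cons a s ih =>
    intro t
    cases t with
    | nil => rw [lcp_nil_right]; simp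
    | cons b t =>
      rw [lcp_cons]
      by_cases h : a = b
      · simp only [h, if_true, List.take_succ_cons, ih t]
      · simp [h]

theorem le_lcp_of_take_eq : ∀ (n : ℕ) (s t : List ℕ), n ≤ s.length → n ≤ t.length →
    s.take n = t.take n → n ≤ lcp s t := by
  intro n
  induction n with
  | zero => intro s t _ _ _; exact Nat.zero_le _
  | succ n ih =>
    intro s t hs ht hteq
    cases s with
    | nil => simp at hs
    | cons a s =>
      cases t with
      | nil => simp at ht
      | cons b t =>
        simp only [List.take_succ_cons, List.cons.injEq] at hteq
        rw [lcp_cons, if_pos hteq.1]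
        have := ih s t (by simpa using hs) (by simpa using ht) hteq.2
        omega

/-- the `t`-th prefix vertex of a finset. -/
def pref (u : Finset ℕ) (t : ℕ) : Finset ℕ := ((u.sort (· ≤ ·)).take t).toFinset

theorem pref_nodup_list (u : Finset ℕ) (t : ℕ) : ((u.sort (· ≤ ·)).take t).Nodup :=
  (u.sort_nodup (· ≤ ·)).sublist (List.take_sublist _ _)

theorem card_pref (u : Finset ℕ) {t : ℕ} (ht : t ≤ u.card) : (pref u t).card = t := by
  rw [pref, List.toFinset_card_of_nodup (pref_nodup_list u t), List.length_take,
    Finset.length_sort]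
  omega

theorem pref_eq_of_le_lcp (u v : Finset ℕ) {t : ℕ}
    (ht : t ≤ lcp (u.sort (· ≤ ·)) (v.sort (· ≤ ·))) : pref u t = pref v t := by
  have h1 : (u.sort (· ≤ ·)).take t = (v.sort (· ≤ ·)).take t := by
    have h2 := take_lcp_eq (u.sort (· ≤ ·)) (v.sort (· ≤ ·))
    have h3 : ∀ w : List ℕ, w.take t = (w.take (lcp (u.sort (· ≤ ·)) (v.sort (· ≤ ·)))).take t := by
      intro w; rw [List.take_take, min_eq_left ht]
    rw [h3 (u.sort (· ≤ ·)), h3 (v.sort (· ≤ ·)), h2]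
  rw [pref, pref, h1]

theorem take_eq_of_pref_eq {u v : Finset ℕ} {t : ℕ}
    (h : pref u t = pref v t) : (u.sort (· ≤ ·)).take t = (v.sort (· ≤ ·)).take t := by
  exact List.Perm.eq_of_pairwise' (r := LE.le)
    ((u.pairwise_sort (· ≤ ·)).sublist (List.take_sublist _ _))
    ((v.pairwise_sort (· ≤ ·)).sublist (List.take_sublist _ _))
    (List.perm_of_nodup_nodup_toFinset_eq (pref_nodup_list u t) (pref_nodup_list v t) h)

theorem le_lcp_of_pref_eq {u v : Finset ℕ} {t : ℕ} (htu : t ≤ u.card) (htv : t ≤ v.card)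
    (h : pref u t = pref v t) : t ≤ lcp (u.sort (· ≤ ·)) (v.sort (· ≤ ·)) := by
  apply le_lcp_of_take_eq t _ _ (by rw [Finset.length_sort]; exact htu)
    (by rw [Finset.length_sort]; exact htv) (take_eq_of_pref_eq h)

theorem eq_of_lcp_eq_card {u v : Finset ℕ}
    (h1 : lcp (u.sort (· ≤ ·)) (v.sort (· ≤ ·)) = u.card)
    (h2 : lcp (u.sort (· ≤ ·)) (v.sort (· ≤ ·)) = v.card) : u = v := by
  have h3 := take_lcp_eq (u.sort (· ≤ ·)) (v.sort (· ≤ ·))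
  rw [h1] at h3
  have hu : (u.sort (· ≤ ·)).take u.card = u.sort (· ≤ ·) := by
    apply List.take_of_length_le; rw [Finset.length_sort]
  have hv : (v.sort (· ≤ ·)).take u.card = v.sort (· ≤ ·) := by
    apply List.take_of_length_le; rw [Finset.length_sort]; omega
  rw [hu, hv] at h3
  have h4 := congrArg List.toFinset h3
  rwa [Finset.sort_toFinset, Finset.sort_toFinset] at h4

theorem dT_comm (u v : Finset ℕ) : dT u v = dT v u := by
  rw [dT, dT, lcp_comm]; omega

theorem dT_self (u : Finset ℕ) : dT u u = 0 := by
  have h := le_lcp_of_take_eq u.card (u.sort (· ≤ ·)) (u.sort (· ≤ ·))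
    (by rw [Finset.length_sort]) (by rw [Finset.length_sort]) rfl
  have h2 := lcp_le_left (u.sort (· ≤ ·)) (u.sort (· ≤ ·))
  rw [Finset.length_sort] at h2
  rw [dT]
  omega

section Banach

variable {Y : Type*} [NormedAddCommGroup Y] [NormedSpace ℝ Y]

def SSet (y : ℕ → Y) (P R : ℕ) : Set ℝ :=
  {x | ∃ F : Finset ℕ, ∃ a : ℕ → ℝ, F.card ≤ P ∧ (∀ i ∈ F, R ≤ i) ∧ (∀ i, |a i| ≤ 1) ∧
    (∀ i ∉ F, a i = 0) ∧ x = ‖∑ i ∈ F, a i • y i‖}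

noncomputable def sig (y : ℕ → Y) (P R : ℕ) : ℝ := sSup (SSet y P R)

noncomputable def sbar (y : ℕ → Y) (P : ℕ) : ℝ := ⨅ R : ℕ, sig y P R

theorem zero_mem_SSet (y : ℕ → Y) (P R : ℕ) : (0 : ℝ) ∈ SSet y P R := by
  refine ⟨∅, 0, by simp, by simp, by simp, by simp, by simp⟩

theorem SSet_nonempty (y : ℕ → Y) (P R : ℕ) : (SSet y P R).Nonempty :=
  ⟨0, zero_mem_SSet y P R⟩

theorem SSet_bddAbove (y : ℕ → Y) (hnorm : ∀ n, ‖y n‖ = 1) (P R : ℕ) :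
    BddAbove (SSet y P R) := by
  refine ⟨P, ?_⟩
  rintro x ⟨F, a, hcard, -, habs, -, rfl⟩
  calc ‖∑ i ∈ F, a i • y i‖ ≤ ∑ i ∈ F, ‖a i • y i‖ := norm_sum_le _ _
    _ ≤ ∑ _i ∈ F, (1 : ℝ) := by
        apply Finset.sum_le_sum
        intro i _
        rw [norm_smul, hnorm i, mul_one, Real.norm_eq_abs]
        exact habs i
    _ = F.card := by simp
    _ ≤ P := by exact_mod_cast hcard

theorem one_mem_SSet (y : ℕ → Y) (hnorm : ∀ n, ‖y n‖ = 1) {P : ℕ} (hP : 1 ≤ P) (R : ℕ) :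
    (1 : ℝ) ∈ SSet y P R := by
  refine ⟨{R}, fun i => if i = R then 1 else 0, by simpa using hP, by simp, ?_, ?_, ?_⟩
  · intro i; by_cases h : i = R <;> simp [h]
  · intro i hi; simp only [Finset.mem_singleton] at hi; simp [hi]
  · simp [hnorm R]

theorem sig_nonneg (y : ℕ → Y) (hnorm : ∀ n, ‖y n‖ = 1) (P R : ℕ) : 0 ≤ sig y P R :=
  le_csSup (SSet_bddAbove y hnorm P R) (zero_mem_SSet y P R)

theorem one_le_sig (y : ℕ → Y) (hnorm : ∀ n, ‖y n‖ = 1) {P : ℕ} (hP : 1 ≤ P) (R : ℕ) :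
    1 ≤ sig y P R :=
  le_csSup (SSet_bddAbove y hnorm P R) (one_mem_SSet y hnorm hP R)

theorem one_le_sbar (y : ℕ → Y) (hnorm : ∀ n, ‖y n‖ = 1) {P : ℕ} (hP : 1 ≤ P) :
    1 ≤ sbar y P :=
  le_ciInf fun R => one_le_sig y hnorm hP R

theorem sbar_bddBelow (y : ℕ → Y) (hnorm : ∀ n, ‖y n‖ = 1) (P : ℕ) :
    BddBelow (Set.range fun R => sig y P R) :=
  ⟨0, by rintro x ⟨R, rfl⟩; exact sig_nonneg y hnorm P R⟩

theorem sbar_le_sig (y : ℕ → Y) (hnorm : ∀ n, ‖y n‖ = 1) (P R : ℕ) :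
    sbar y P ≤ sig y P R :=
  ciInf_le (sbar_bddBelow y hnorm P) R

theorem norm_comb_le (ν : ℝ) (hν : 0 < ν) (y : ℕ → Y)
    (hc0 : ∀ (k : ℕ) (n : Fin k → ℕ), StrictMono n → (∀ i, k ≤ n i) →
      ∀ a : Fin k → ℝ,
        (1 / (1 + ν)) * ‖a‖ ≤ ‖∑ i, a i • y (n i)‖ ∧
        ‖∑ i, a i • y (n i)‖ ≤ (1 + ν) * ‖a‖)
    {F : Finset ℕ} {a : ℕ → ℝ} (hF : ∀ i ∈ F, F.card ≤ i) (ha : ∀ i, |a i| ≤ 1) :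
    ‖∑ i ∈ F, a i • y i‖ ≤ 1 + ν := by
  set e := F.orderIsoOfFin rfl with he
  set n : Fin F.card → ℕ := fun i => ((e i : F) : ℕ) with hn
  have hmono : StrictMono n := by
    intro i j hij
    exact Subtype.coe_lt_coe.mpr (e.strictMono hij)
  have hge : ∀ i, F.card ≤ n i := fun i => hF _ (e i).2
  have hsum : ∑ i ∈ F, a i • y i = ∑ i, a (n i) • y (n i) := by
    rw [← Finset.sum_coe_sort F (fun i => a i • y i)]
    exact (Fintype.sum_equiv e.toEquiv _ _ (fun i => rfl)).symm
  rw [hsum]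
  calc ‖∑ i, a (n i) • y (n i)‖ ≤ (1 + ν) * ‖fun i => a (n i)‖ :=
        (hc0 F.card n hmono hge _).2
    _ ≤ (1 + ν) * 1 := by
        apply mul_le_mul_of_nonneg_left _ (by linarith)
        rw [pi_norm_le_iff_of_nonneg zero_le_one]
        intro i
        rw [Real.norm_eq_abs]
        exact ha (n i)
    _ = 1 + ν := mul_one _

theorem sbar_le_one_add (ν : ℝ) (hν : 0 < ν) (y : ℕ → Y) (hnorm : ∀ n, ‖y n‖ = 1)
    (hc0 : ∀ (k : ℕ) (n : Fin k → ℕ), StrictMono n → (∀ i, k ≤ n i) →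
      ∀ a : Fin k → ℝ,
        (1 / (1 + ν)) * ‖a‖ ≤ ‖∑ i, a i • y (n i)‖ ∧
        ‖∑ i, a i • y (n i)‖ ≤ (1 + ν) * ‖a‖) (P : ℕ) :
    sbar y P ≤ 1 + ν := by
  refine (sbar_le_sig y hnorm P P).trans ?_
  apply csSup_le (SSet_nonempty y P P)
  rintro x ⟨F, a, hcard, hge, habs, -, rfl⟩
  exact norm_comb_le ν hν y hc0 (fun i hi => hcard.trans (hge i hi)) habs

theorem exists_stable (y : ℕ → Y) (hnorm : ∀ n, ‖y n‖ = 1) (C : ℝ)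
    (hC : ∀ P : ℕ, 1 ≤ P → sbar y P ≤ C) (B : ℕ) (hB : 1 ≤ B) (δ : ℝ) (hδ : 0 < δ) :
    ∃ t : ℕ, sbar y (B ^ (t + 1)) ≤ (1 + δ) * sbar y (B ^ t) := by
  by_contra hcon
  push_neg at hcon
  have hgrow : ∀ t : ℕ, (1 + δ) ^ t ≤ sbar y (B ^ t) := by
    intro t
    induction t with
    | zero => simpa using one_le_sbar y hnorm (le_refl 1)
    | succ t ih =>
      calc (1 + δ) ^ (t+1) = (1 + δ) * (1 + δ) ^ t := by ring
        _ ≤ (1 + δ) * sbar y (B ^ t) := mul_le_mul_of_nonneg_left ih (by linarith)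
        _ ≤ sbar y (B ^ (t+1)) := le_of_lt (hcon t)
  obtain ⟨T, hT⟩ := pow_unbounded_of_one_lt C (by linarith : (1:ℝ) < 1 + δ)
  have := (hgrow T).trans (hC (B ^ T) (Nat.one_le_pow _ _ (by omega)))
  linarith

theorem exists_block (y : ℕ → Y) (hnorm : ∀ n, ‖y n‖ = 1) (P₀ : ℕ) (δ : ℝ) (hδ : 0 < δ)
    (R : ℕ) : ∃ F : Finset ℕ, ∃ a : ℕ → ℝ, F.card ≤ P₀ ∧ (∀ i ∈ F, R ≤ i) ∧
      (∀ i, |a i| ≤ 1) ∧ (∀ i ∉ F, a i = 0) ∧ sbar y P₀ - δ < ‖∑ i ∈ F, a i • y i‖ := by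
  have h1 : sbar y P₀ - δ < sig y P₀ R :=
    lt_of_lt_of_le (by linarith) (sbar_le_sig y hnorm P₀ R)
  obtain ⟨x, hmem, hlt⟩ := exists_lt_of_lt_csSup (SSet_nonempty y P₀ R) h1
  obtain ⟨F, a, hc1, hc2, hc3, hc4, rfl⟩ := hmem
  exact ⟨F, a, hc1, hc2, hc3, hc4, hlt⟩

end Banach

end TreeEmbedAux

set_option maxHeartbeats 1000000 in
/-- If `Y` contains a normalized sequence `(y_n)` such that for all
`k ≤ n_1 < ⋯ < n_k` and scalars `(a_i)`,
`(1/(1+ν)) max|a_i| ≤ ‖∑ a_i y_{n_i}‖ ≤ (1+ν) max|a_i|`, then for every `k` the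
countably branching tree `T_k^ω = ([ℕ]^{≤k}, d_T)` maps into `Y` with
`d_T(x,y)/(2(1+ν)) ≤ ‖f_k(x) − f_k(y)‖ ≤ d_T(x,y)`; in particular the trees
`(T_k^ω)` equi-bi-Lipschitzly embed into `Y`. -/
theorem trees_embed_from_c0_spreading_model
    {Y : Type*} [NormedAddCommGroup Y] [NormedSpace ℝ Y] [CompleteSpace Y]
    (ν : ℝ) (hν : 0 < ν) (y : ℕ → Y) (hnorm : ∀ n, ‖y n‖ = 1)
    (hc0 : ∀ (k : ℕ) (n : Fin k → ℕ), StrictMono n → (∀ i, k ≤ n i) →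
      ∀ a : Fin k → ℝ,
        (1 / (1 + ν)) * ‖a‖ ≤ ‖∑ i, a i • y (n i)‖ ∧
        ‖∑ i, a i • y (n i)‖ ≤ (1 + ν) * ‖a‖) :
    ∀ k : ℕ, ∃ f : Finset ℕ → Y,
      ∀ u v : Finset ℕ, u.card ≤ k → v.card ≤ k →
        (dT u v : ℝ) / (2 * (1 + ν)) ≤ ‖f u - f v‖ ∧ ‖f u - f v‖ ≤ (dT u v : ℝ) := by
  classical
  intro k
  -- small constant
  set δ : ℝ := ν / (7 + 4 * ν) with hδdef
  have hν7 : (0:ℝ) < 7 + 4 * ν := by linarith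
  have hδpos : 0 < δ := div_pos hν hν7
  have hδsmall : δ * (6 + 4 * ν) < ν := by
    rw [hδdef, div_mul_eq_mul_div, div_lt_iff₀ hν7]
    nlinarith
  set B : ℕ := 2 * k + 2 with hBdef
  obtain ⟨t, hstab⟩ := TreeEmbedAux.exists_stable y hnorm (1 + ν)
    (fun P _ => TreeEmbedAux.sbar_le_one_add ν hν y hnorm hc0 P) B (by omega) δ hδpos
  set P₀ : ℕ := B ^ t with hP₀def
  set P₁ : ℕ := B ^ (t + 1) with hP₁def
  have hP₀1 : 1 ≤ P₀ := Nat.one_le_pow _ _ (by omega)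
  have hP₁1 : 1 ≤ P₁ := Nat.one_le_pow _ _ (by omega)
  set σ₀ : ℝ := TreeEmbedAux.sbar y P₀ with hσ₀def
  set σ₁ : ℝ := TreeEmbedAux.sbar y P₁ with hσ₁def
  have hσ₀1 : 1 ≤ σ₀ := TreeEmbedAux.one_le_sbar y hnorm hP₀1
  have hσ₁1 : 1 ≤ σ₁ := TreeEmbedAux.one_le_sbar y hnorm hP₁1
  have hσ₁le : σ₁ ≤ (1 + δ) * σ₀ := hstab
  have hσ₀ν : σ₀ ≤ 1 + ν := TreeEmbedAux.sbar_le_one_add ν hν y hnorm hc0 P₀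
  have hσδpos : 0 < σ₁ + δ := by linarith
  -- choice of R₁
  have hinf : TreeEmbedAux.sbar y P₁ < σ₁ + δ := by rw [← hσ₁def]; linarith
  obtain ⟨R₁, hR₁⟩ := exists_lt_of_ciInf_lt hinf
  -- blocks
  choose Fb ab hFbcard hFbge hFbabs hFbzero hFbnorm using
    fun R => TreeEmbedAux.exists_block y hnorm P₀ δ hδpos R
  set bnd : ℕ → ℕ := fun j => Nat.rec R₁ (fun _ prev => max (prev + 1) ((Fb prev).sup id + 1)) j
    with hbnddef
  have hbnd0 : bnd 0 = R₁ := rfl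
  have hbndsucc : ∀ j, bnd (j + 1) = max (bnd j + 1) ((Fb (bnd j)).sup id + 1) := fun j => rfl
  have hbndlt : ∀ j, bnd j < bnd (j + 1) := by intro j; rw [hbndsucc]; omega
  have hbndmono : Monotone bnd := monotone_nat_of_le_succ (fun j => (hbndlt j).le)
  have hFblt : ∀ j, ∀ x ∈ Fb (bnd j), x < bnd (j + 1) := by
    intro j x hx
    have h1 : x ≤ (Fb (bnd j)).sup id := Finset.le_sup (f := id) hx
    rw [hbndsucc]
    omega
  have hdisj : ∀ i j : ℕ, i < j → Disjoint (Fb (bnd i)) (Fb (bnd j)) := by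
    intro i j hij
    rw [Finset.disjoint_left]
    intro x hxi hxj
    have h1 : x < bnd (i + 1) := hFblt i x hxi
    have h2 : bnd (i + 1) ≤ bnd j := hbndmono hij
    have h3 : bnd j ≤ x := hFbge (bnd j) x hxj
    omega
  -- blocks indexed by slots (vertices of the tree)
  set enc : Finset ℕ → ℕ := fun s => Encodable.encode s with hencdef
  have hencinj : Function.Injective enc := Encodable.encode_injective
  set ZF : Finset ℕ → Finset ℕ := fun s => Fb (bnd (enc s)) with hZFdef
  set Za : Finset ℕ → ℕ → ℝ := fun s => ab (bnd (enc s)) with hZadef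
  set Z : Finset ℕ → Y := fun s => ∑ i ∈ ZF s, Za s i • y i with hZdef
  have hZdisj : ∀ s s' : Finset ℕ, s ≠ s' → Disjoint (ZF s) (ZF s') := by
    intro s s' hss
    have h1 : enc s ≠ enc s' := fun h => hss (hencinj h)
    rcases lt_or_gt_of_ne h1 with h | h
    · exact hdisj _ _ h
    · exact (hdisj _ _ h).symm
  have hZnorm : ∀ s, σ₀ - δ < ‖Z s‖ := fun s => hFbnorm _
  have hZcard : ∀ s, (ZF s).card ≤ P₀ := fun s => hFbcard _
  have hZge : ∀ s, ∀ i ∈ ZF s, R₁ ≤ i := by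
    intro s i hi
    have h1 : bnd (enc s) ≤ i := hFbge _ i hi
    have h2 : bnd 0 ≤ bnd (enc s) := hbndmono (Nat.zero_le _)
    omega
  have hZabs : ∀ s i, |Za s i| ≤ 1 := fun s i => hFbabs _ i
  have hZzero : ∀ s, ∀ i ∉ ZF s, Za s i = 0 := fun s i hi => hFbzero _ i hi
  -- key combination estimate
  have key : ∀ (S : Finset (Finset ℕ)) (d : Finset ℕ → ℝ) (C : ℝ), 0 < C → S.card ≤ B →
      (∀ s ∈ S, |d s| ≤ C) → ‖∑ s ∈ S, d s • Z s‖ ≤ C * (σ₁ + δ) := by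
    intro S d C hC hScard hd
    set G : Finset ℕ := S.biUnion ZF with hGdef
    set AA : ℕ → ℝ := fun i => ∑ s ∈ S, d s * Za s i with hAAdef
    have hpd : (S : Set (Finset ℕ)).PairwiseDisjoint ZF := fun s _ s' _ h => hZdisj s s' h
    have hAAloc : ∀ s ∈ S, ∀ i ∈ ZF s, AA i = d s * Za s i := by
      intro s hs i hi
      simp only [hAAdef]
      apply Finset.sum_eq_single_of_mem s hs
      intro s' hs' hss
      have hnot : i ∉ ZF s' := fun hmem =>
        (Finset.disjoint_left.mp (hZdisj s' s hss)) hmem hi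
      rw [hZzero s' i hnot, mul_zero]
    have hAAzero : ∀ i, i ∉ G → AA i = 0 := by
      intro i hi
      simp only [hAAdef]
      apply Finset.sum_eq_zero
      intro s hs
      have hnot : i ∉ ZF s := fun h => hi (Finset.mem_biUnion.mpr ⟨s, hs, h⟩)
      rw [hZzero s i hnot, mul_zero]
    have hAAbound : ∀ i, |AA i| ≤ C := by
      intro i
      by_cases hiG : i ∈ G
      · obtain ⟨s, hs, hiZF⟩ := Finset.mem_biUnion.mp hiG
        rw [hAAloc s hs i hiZF, abs_mul]
        calc |d s| * |Za s i| ≤ C * 1 :=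
              mul_le_mul (hd s hs) (hZabs s i) (abs_nonneg _) hC.le
          _ = C := mul_one C
      · rw [hAAzero i hiG, abs_zero]; exact hC.le
    have hrw : ∑ s ∈ S, d s • Z s = ∑ i ∈ G, AA i • y i := by
      rw [hGdef, Finset.sum_biUnion hpd]
      apply Finset.sum_congr rfl
      intro s hs
      rw [hZdef]
      simp only
      rw [Finset.smul_sum]
      apply Finset.sum_congr rfl
      intro i hi
      rw [smul_smul, hAAloc s hs i hi]
    have hGcard : G.card ≤ P₁ := by
      calc G.card ≤ ∑ s ∈ S, (ZF s).card := Finset.card_biUnion_le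
        _ ≤ ∑ _s ∈ S, P₀ := Finset.sum_le_sum (fun s _ => hZcard s)
        _ = S.card * P₀ := by rw [Finset.sum_const, smul_eq_mul]
        _ ≤ B * P₀ := Nat.mul_le_mul_right _ hScard
        _ = P₁ := by rw [hP₁def, hP₀def, pow_succ, mul_comm]
    have hmem : ‖∑ i ∈ G, (AA i / C) • y i‖ ∈ TreeEmbedAux.SSet y P₁ R₁ := by
      refine ⟨G, fun i => AA i / C, hGcard, ?_, ?_, ?_, rfl⟩
      · intro i hi
        obtain ⟨s, hs, hiZF⟩ := Finset.mem_biUnion.mp hi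
        exact hZge s i hiZF
      · intro i
        show |AA i / C| ≤ 1
        rw [abs_div, abs_of_pos hC, div_le_one hC]
        exact hAAbound i
      · intro i hi
        show AA i / C = 0
        rw [hAAzero i hi, zero_div]
    have hscale : ∑ i ∈ G, AA i • y i = C • ∑ i ∈ G, (AA i / C) • y i := by
      rw [Finset.smul_sum]
      apply Finset.sum_congr rfl
      intro i _
      rw [smul_smul]
      congr 1
      field_simp
    rw [hrw, hscale, norm_smul, Real.norm_eq_abs, abs_of_pos hC]
    apply mul_le_mul_of_nonneg_left _ hC.le
    calc ‖∑ i ∈ G, (AA i / C) • y i‖ ≤ TreeEmbedAux.sig y P₁ R₁ :=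
          le_csSup (TreeEmbedAux.SSet_bddAbove y hnorm P₁ R₁) hmem
      _ ≤ σ₁ + δ := hR₁.le
  -- the embedding
  set γ : ℝ := 1 / (σ₁ + δ) with hγdef
  have hγpos : 0 < γ := div_pos one_pos hσδpos
  have hγσ : γ * (σ₁ + δ) = 1 := by
    rw [hγdef, one_div, inv_mul_cancel₀ hσδpos.ne']
  set f : Finset ℕ → Y :=
    fun u => γ • ∑ t' ∈ Finset.range u.card,
      ((u.card - t' : ℕ) : ℝ) • Z (TreeEmbedAux.pref u (t' + 1)) with hfdef
  refine ⟨f, ?_⟩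
  -- the general sum-rewriting lemma
  have hgen : ∀ (w : Finset ℕ) (cw : Finset ℕ → ℝ),
      (cw = fun s => if 1 ≤ s.card ∧ s.card ≤ w.card ∧ s = TreeEmbedAux.pref w s.card
        then ((w.card + 1 - s.card : ℕ) : ℝ) else 0) →
      ∑ t' ∈ Finset.range w.card, ((w.card - t' : ℕ) : ℝ) • Z (TreeEmbedAux.pref w (t' + 1))
        = ∑ s ∈ (Finset.range w.card).image (fun t' => TreeEmbedAux.pref w (t' + 1)),
            cw s • Z s := by
    intro w cw hcw
    rw [Finset.sum_image]
    · apply Finset.sum_congr rfl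
      intro t' ht'
      rw [Finset.mem_range] at ht'
      have hc : (TreeEmbedAux.pref w (t' + 1)).card = t' + 1 :=
        TreeEmbedAux.card_pref w (by omega)
      have hcond : 1 ≤ (TreeEmbedAux.pref w (t' + 1)).card ∧
          (TreeEmbedAux.pref w (t' + 1)).card ≤ w.card ∧
          TreeEmbedAux.pref w (t' + 1) =
            TreeEmbedAux.pref w (TreeEmbedAux.pref w (t' + 1)).card := by
        refine ⟨by omega, by omega, by rw [hc]⟩
      have hval : cw (TreeEmbedAux.pref w (t' + 1))
          = ((w.card + 1 - (TreeEmbedAux.pref w (t' + 1)).card : ℕ) : ℝ) := by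
        simp only [hcw]
        rw [if_pos hcond]
      rw [hval, hc]
      congr 2
      omega
    · intro t1 ht1 t2 ht2 heq
      rw [Finset.mem_coe, Finset.mem_range] at ht1 ht2
      have h1 : (TreeEmbedAux.pref w (t1 + 1)).card = t1 + 1 :=
        TreeEmbedAux.card_pref w (by omega)
      have h2 : (TreeEmbedAux.pref w (t2 + 1)).card = t2 + 1 :=
        TreeEmbedAux.card_pref w (by omega)
      beta_reduce at heq
      rw [heq] at h1
      omega
  -- the main estimate in the case v.card ≤ u.card, u ≠ v
  have main : ∀ u v : Finset ℕ, u.card ≤ k → v.card ≤ k → v.card ≤ u.card → u ≠ v →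
      (dT u v : ℝ) / (2 * (1 + ν)) ≤ ‖f u - f v‖ ∧ ‖f u - f v‖ ≤ (dT u v : ℝ) := by
    intro u v hu hv hvu hne
    set l : ℕ := lcp (u.sort (· ≤ ·)) (v.sort (· ≤ ·)) with hldef
    have hlm : l ≤ v.card := by
      have h1 := TreeEmbedAux.lcp_le_right (u.sort (· ≤ ·)) (v.sort (· ≤ ·))
      rw [Finset.length_sort] at h1
      rw [hldef]; exact h1
    have hln : l ≤ u.card := by
      have h1 := TreeEmbedAux.lcp_le_left (u.sort (· ≤ ·)) (v.sort (· ≤ ·))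
      rw [Finset.length_sort] at h1
      rw [hldef]; exact h1
    have hlnlt : l < u.card := by
      rcases Nat.lt_or_ge l u.card with h | h
      · exact h
      · exfalso
        have h1 : lcp (u.sort (· ≤ ·)) (v.sort (· ≤ ·)) = u.card := by
          rw [← hldef]; omega
        have h2 : lcp (u.sort (· ≤ ·)) (v.sort (· ≤ ·)) = v.card := by
          rw [← hldef]; omega
        exact hne (TreeEmbedAux.eq_of_lcp_eq_card h1 h2)
    set a : ℕ := u.card - l with hadef
    have ha1 : 1 ≤ a := by omega
    have haR : (0:ℝ) < (a:ℝ) := by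
      have : 0 < a := ha1
      exact_mod_cast this
    -- dT value
    have hdT : dT u v = a + (v.card - l) := by
      rw [dT]
      rw [← hldef]
      omega
    -- coefficient functions
    set cu : Finset ℕ → ℝ := fun s =>
      if 1 ≤ s.card ∧ s.card ≤ u.card ∧ s = TreeEmbedAux.pref u s.card
      then ((u.card + 1 - s.card : ℕ) : ℝ) else 0 with hcudef
    set cv : Finset ℕ → ℝ := fun s =>
      if 1 ≤ s.card ∧ s.card ≤ v.card ∧ s = TreeEmbedAux.pref v s.card
      then ((v.card + 1 - s.card : ℕ) : ℝ) else 0 with hcvdef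
    set Su : Finset (Finset ℕ) :=
      (Finset.range u.card).image (fun t' => TreeEmbedAux.pref u (t' + 1)) with hSudef
    set Sv : Finset (Finset ℕ) :=
      (Finset.range v.card).image (fun t' => TreeEmbedAux.pref v (t' + 1)) with hSvdef
    set S : Finset (Finset ℕ) := Su ∪ Sv with hSdef
    have hcu_mem : ∀ s : Finset ℕ, cu s ≠ 0 → s ∈ Su := by
      intro s hs
      by_cases hcond : 1 ≤ s.card ∧ s.card ≤ u.card ∧ s = TreeEmbedAux.pref u s.card
      · obtain ⟨h1, h2, h3⟩ := hcond
        rw [hSudef, Finset.mem_image]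
        refine ⟨s.card - 1, Finset.mem_range.mpr (by omega), ?_⟩
        rw [Nat.sub_add_cancel h1]
        exact h3.symm
      · exfalso
        apply hs
        simp only [hcudef]
        exact if_neg hcond
    have hcv_mem : ∀ s : Finset ℕ, cv s ≠ 0 → s ∈ Sv := by
      intro s hs
      by_cases hcond : 1 ≤ s.card ∧ s.card ≤ v.card ∧ s = TreeEmbedAux.pref v s.card
      · obtain ⟨h1, h2, h3⟩ := hcond
        rw [hSvdef, Finset.mem_image]
        refine ⟨s.card - 1, Finset.mem_range.mpr (by omega), ?_⟩
        rw [Nat.sub_add_cancel h1]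
        exact h3.symm
      · exfalso
        apply hs
        simp only [hcvdef]
        exact if_neg hcond
    have hfu : f u - f v = γ • ∑ s ∈ S, (cu s - cv s) • Z s := by
      simp only [hfdef]
      rw [← smul_sub]
      congr 1
      rw [hgen u cu hcudef, hgen v cv hcvdef, ← hSudef, ← hSvdef]
      have e1 : ∑ s ∈ Su, cu s • Z s = ∑ s ∈ S, cu s • Z s := by
        apply Finset.sum_subset Finset.subset_union_left
        intro s _ hns
        have hz : cu s = 0 := by
          by_contra hc
          exact hns (hcu_mem s hc)
        rw [hz, zero_smul]
      have e2 : ∑ s ∈ Sv, cv s • Z s = ∑ s ∈ S, cv s • Z s := by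
        apply Finset.sum_subset Finset.subset_union_right
        intro s _ hns
        have hz : cv s = 0 := by
          by_contra hc
          exact hns (hcv_mem s hc)
        rw [hz, zero_smul]
      rw [e1, e2, ← Finset.sum_sub_distrib]
      apply Finset.sum_congr rfl
      intro s _
      rw [sub_smul]
    -- cardinality of S
    have hScard : S.card ≤ B := by
      calc S.card ≤ Su.card + Sv.card := Finset.card_union_le _ _
        _ ≤ u.card + v.card := by
            apply Nat.add_le_add
            · exact (Finset.card_image_le).trans (by rw [Finset.card_range])
            · exact (Finset.card_image_le).trans (by rw [Finset.card_range])
        _ ≤ B := by omega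
    -- coefficient bound
    have hd : ∀ s ∈ S, |cu s - cv s| ≤ (a : ℝ) := by
      intro s _
      by_cases hcuc : 1 ≤ s.card ∧ s.card ≤ u.card ∧ s = TreeEmbedAux.pref u s.card
      · by_cases hcvc : 1 ≤ s.card ∧ s.card ≤ v.card ∧ s = TreeEmbedAux.pref v s.card
        · have hval : cu s - cv s = ((u.card - v.card : ℕ) : ℝ) := by
            simp only [hcudef, hcvdef, if_pos hcuc, if_pos hcvc]
            have e1 : (u.card + 1 - s.card : ℕ) = (u.card - v.card) + (v.card + 1 - s.card) := by
              obtain ⟨-, h2, -⟩ := hcvc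
              omega
            rw [e1, Nat.cast_add, add_sub_cancel_right]
          rw [hval, abs_of_nonneg (Nat.cast_nonneg _)]
          exact Nat.cast_le.mpr (by omega)
        · have hlc : l < s.card := by
            by_contra hc
            push_neg at hc
            apply hcvc
            obtain ⟨h1, h2, h3⟩ := hcuc
            exact ⟨h1, hc.trans hlm,
              h3.trans (TreeEmbedAux.pref_eq_of_le_lcp u v (by rw [← hldef]; exact hc))⟩
          have hval1 : cu s = ((u.card + 1 - s.card : ℕ) : ℝ) := by
            simp only [hcudef, if_pos hcuc]
          have hval2 : cv s = 0 := by
            simp only [hcvdef, if_neg hcvc]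
          rw [hval1, hval2, sub_zero, abs_of_nonneg (Nat.cast_nonneg _)]
          exact Nat.cast_le.mpr (by omega)
      · by_cases hcvc : 1 ≤ s.card ∧ s.card ≤ v.card ∧ s = TreeEmbedAux.pref v s.card
        · have hlc : l < s.card := by
            by_contra hc
            push_neg at hc
            apply hcuc
            obtain ⟨h1, h2, h3⟩ := hcvc
            exact ⟨h1, (hc.trans hlm).trans hvu,
              h3.trans (TreeEmbedAux.pref_eq_of_le_lcp v u
                (by rw [TreeEmbedAux.lcp_comm, ← hldef]; exact hc))⟩
          have hval1 : cu s = 0 := by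
            simp only [hcudef, if_neg hcuc]
          have hval2 : cv s = ((v.card + 1 - s.card : ℕ) : ℝ) := by
            simp only [hcvdef, if_pos hcvc]
          rw [hval1, hval2, zero_sub, abs_neg, abs_of_nonneg (Nat.cast_nonneg _)]
          exact Nat.cast_le.mpr (by omega)
        · have hval1 : cu s = 0 := by
            simp only [hcudef, if_neg hcuc]
          have hval2 : cv s = 0 := by
            simp only [hcvdef, if_neg hcvc]
          rw [hval1, hval2, sub_zero, abs_zero]
          exact Nat.cast_nonneg _
    -- the distinguished slot
    set st : Finset ℕ := TreeEmbedAux.pref u (l + 1) with hstdef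
    have hstcard : st.card = l + 1 := TreeEmbedAux.card_pref u (by omega)
    have hstS : st ∈ S := by
      rw [hSdef]
      apply Finset.mem_union_left
      rw [hSudef, Finset.mem_image]
      exact ⟨l, Finset.mem_range.mpr hlnlt, rfl⟩
    have hcust : cu st = (a : ℝ) := by
      have hcond : 1 ≤ st.card ∧ st.card ≤ u.card ∧ st = TreeEmbedAux.pref u st.card := by
        refine ⟨by omega, by omega, ?_⟩
        rw [hstcard]
      have hval : cu st = ((u.card + 1 - st.card : ℕ) : ℝ) := by
        simp only [hcudef, if_pos hcond]
      rw [hval, hstcard]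
      congr 1
      omega
    have hcvst : cv st = 0 := by
      have hcond : ¬(1 ≤ st.card ∧ st.card ≤ v.card ∧ st = TreeEmbedAux.pref v st.card) := by
        rintro ⟨-, h2, h3⟩
        rw [hstcard] at h2 h3
        have h4 : l + 1 ≤ lcp (u.sort (· ≤ ·)) (v.sort (· ≤ ·)) := by
          apply TreeEmbedAux.le_lcp_of_pref_eq (by omega) h2
          rw [← hstdef]
          exact h3
        rw [← hldef] at h4
        omega
      simp only [hcvdef, if_neg hcond]
    have hdst : cu st - cv st = (a : ℝ) := by rw [hcust, hcvst, sub_zero]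
    -- upper bound
    set T : Y := ∑ s ∈ S, (cu s - cv s) • Z s with hTdef
    have hTub : ‖T‖ ≤ (a : ℝ) * (σ₁ + δ) := key S _ (a : ℝ) haR hScard hd
    have hnormfuv : ‖f u - f v‖ = γ * ‖T‖ := by
      rw [hfu, norm_smul, Real.norm_eq_abs, abs_of_pos hγpos]
    have hupper : ‖f u - f v‖ ≤ (dT u v : ℝ) := by
      rw [hnormfuv]
      calc γ * ‖T‖ ≤ γ * ((a : ℝ) * (σ₁ + δ)) :=
            mul_le_mul_of_nonneg_left hTub hγpos.le
        _ = (a : ℝ) * (γ * (σ₁ + δ)) := by ring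
        _ = (a : ℝ) := by rw [hγσ, mul_one]
        _ ≤ (dT u v : ℝ) := by
            rw [hdT]
            exact_mod_cast Nat.le_add_right a (v.card - l)
    -- lower bound
    set d' : Finset ℕ → ℝ := fun s => (if s = st then 2 * (a : ℝ) else 0) - (cu s - cv s)
      with hd'def
    have e1 : ∀ s ∈ S, (if s = st then 2 * (a : ℝ) else 0) • Z s
        = (if s = st then (2 * (a : ℝ)) • Z s else 0) := by
      intro s _
      by_cases h : s = st <;> simp [h]
    have hWT : ∑ s ∈ S, d' s • Z s = (2 * (a : ℝ)) • Z st - T := by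
      simp only [hd'def, sub_smul]
      rw [Finset.sum_sub_distrib, Finset.sum_congr rfl e1,
        Finset.sum_ite_eq' S st (fun s => (2 * (a : ℝ)) • Z s), if_pos hstS, hTdef]
      congr 1
      apply Finset.sum_congr rfl
      intro s _
      rw [sub_smul]
    have hd' : ∀ s ∈ S, |d' s| ≤ (a : ℝ) := by
      intro s hs
      simp only [hd'def]
      by_cases h : s = st
      · rw [h, if_pos rfl, hdst, show 2 * (a : ℝ) - (a : ℝ) = (a : ℝ) by ring,
          abs_of_nonneg (Nat.cast_nonneg _)]
      · rw [if_neg h, zero_sub, abs_neg]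
        exact hd s hs
    have hWTub : ‖(2 * (a : ℝ)) • Z st - T‖ ≤ (a : ℝ) * (σ₁ + δ) := by
      rw [← hWT]
      exact key S d' (a : ℝ) haR hScard hd'
    have hTlb : (a : ℝ) * (2 * σ₀ - σ₁ - 3 * δ) ≤ ‖T‖ := by
      have h1 : ‖(2 * (a : ℝ)) • Z st‖ ≤ ‖(2 * (a : ℝ)) • Z st - T‖ + ‖T‖ := by
        calc ‖(2 * (a : ℝ)) • Z st‖ = ‖((2 * (a : ℝ)) • Z st - T) + T‖ := by
              rw [sub_add_cancel]
          _ ≤ ‖(2 * (a : ℝ)) • Z st - T‖ + ‖T‖ := norm_add_le _ _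
      have h2 : ‖(2 * (a : ℝ)) • Z st‖ = 2 * (a : ℝ) * ‖Z st‖ := by
        rw [norm_smul, Real.norm_eq_abs, abs_of_pos (by linarith)]
      have h3 : 2 * (a : ℝ) * (σ₀ - δ) ≤ 2 * (a : ℝ) * ‖Z st‖ :=
        mul_le_mul_of_nonneg_left (hZnorm st).le (by linarith)
      nlinarith [hWTub, h1, h2, h3]
    have harith : σ₁ + δ ≤ (1 + ν) * (2 * σ₀ - σ₁ - 3 * δ) := by
      have hcoef : 0 ≤ ν - δ * (2 + ν) := by nlinarith
      have h5 : (ν - δ * (2 + ν)) * 1 ≤ (ν - δ * (2 + ν)) * σ₀ :=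
        mul_le_mul_of_nonneg_left hσ₀1 hcoef
      have h6 : (1 + ν) * σ₁ ≤ (1 + ν) * ((1 + δ) * σ₀) :=
        mul_le_mul_of_nonneg_left hσ₁le (by linarith)
      nlinarith [h5, h6, hσ₁le, hδpos, hν]
    have hlower : (dT u v : ℝ) / (2 * (1 + ν)) ≤ ‖f u - f v‖ := by
      have h1ν : (0:ℝ) < 1 + ν := by linarith
      have h1 : (σ₁ + δ) / (1 + ν) ≤ 2 * σ₀ - σ₁ - 3 * δ := by
        rw [div_le_iff₀ h1ν]
        nlinarith [harith]
      have h2 : (a : ℝ) / (1 + ν) ≤ γ * ‖T‖ := by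
        have h3 : (a : ℝ) * ((σ₁ + δ) / (1 + ν)) ≤ (a : ℝ) * (2 * σ₀ - σ₁ - 3 * δ) :=
          mul_le_mul_of_nonneg_left h1 haR.le
        have h4 : γ * ((a : ℝ) * ((σ₁ + δ) / (1 + ν))) ≤ γ * ‖T‖ :=
          mul_le_mul_of_nonneg_left (h3.trans hTlb) hγpos.le
        calc (a : ℝ) / (1 + ν) = γ * ((a : ℝ) * ((σ₁ + δ) / (1 + ν))) := by
              rw [hγdef]
              field_simp
          _ ≤ γ * ‖T‖ := h4
      rw [hnormfuv]
      refine le_trans ?_ h2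
      rw [div_le_div_iff₀ (by linarith) h1ν]
      have h5 : (dT u v : ℝ) ≤ 2 * (a : ℝ) := by
        rw [hdT]
        push_cast
        have h6 : ((v.card - l : ℕ) : ℝ) ≤ (a : ℝ) := Nat.cast_le.mpr (by omega)
        linarith
      nlinarith [h5, h1ν]
    exact ⟨hlower, hupper⟩
  -- glue
  intro u v hu hv
  rcases eq_or_ne u v with rfl | hne
  · rw [sub_self, norm_zero, TreeEmbedAux.dT_self]
    norm_num
  · rcases le_total v.card u.card with h | h
    · exact main u v hu hv h hne
    · obtain ⟨h1, h2⟩ := main v u hv hu h hne.symm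
      rw [norm_sub_rev (f v) (f u)] at h1 h2
      rw [TreeEmbedAux.dT_comm v u] at h1 h2
      exact ⟨h1, h2⟩
end

section
/- Let Y be a reflexive Banach space with a bimonotone Schauder basis. For every k, r ∈ ℕ, every ε > 0, every infinite subset M of ℕ, and every Lipschitz map f : ([M]^k, d_H) → Y, there exist an infinite subset M' ⊂ M and a vector y ∈ Y such that for every m̄ ∈ [M']^k there are finitely supported vectors y^{(1)}_{m̄} ≺ y^{(2)}_{m̄} ≺ ... ≺ y^{(k)}_{m̄} with min supp(y^{(1)}_{m̄}) ≥ r, ‖y^{(i)}_{m̄}‖ ≤ Lip(f) for all i, and ‖f(m̄) − (y + y^{(1)}_{m̄} + ... + y^{(k)}_{m̄})‖ < ε. -/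
/-- The Hamming distance `d_H` on finite subsets of `ℕ` (elements listed in increasing
order). -/
def dH (m n : Finset ℕ) : ℕ :=
  ((m.sort (· ≤ ·)).zip (n.sort (· ≤ ·))).countP (fun p => p.1 != p.2)
    + (max m.card n.card - min m.card n.card)

open Filter Finset
set_option linter.unusedSectionVars false

section AuxA

section Aux
variable {Y : Type*} [NormedAddCommGroup Y] [NormedSpace ℝ Y] [CompleteSpace Y]
  (e : ℕ → Y) (coef : Y → ℕ → ℝ)

variable
  (hexp : ∀ v : Y, Filter.Tendsto (fun N => ∑ i ∈ Finset.range N, coef v i • e i)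
      Filter.atTop (nhds v))
  (huniq : ∀ (a : ℕ → ℝ) (v : Y),
      Filter.Tendsto (fun N => ∑ i ∈ Finset.range N, a i • e i) Filter.atTop (nhds v) →
        a = coef v)
  (hbimono : ∀ (v : Y) (p q : ℕ), ‖∑ i ∈ Finset.Ico p q, coef v i • e i‖ ≤ ‖v‖)

include huniq in
lemma coef_finsum (b : ℕ → ℝ) (N : ℕ) :
    coef (∑ i ∈ Finset.range N, b i • e i) = fun i => if i < N then b i else 0 := by
  refine (huniq _ _ ?_).symm
  have h : ∀ N' ≥ N, (∑ i ∈ Finset.range N', (if i < N then b i else 0) • e i)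
      = ∑ i ∈ Finset.range N, b i • e i := by
    intro N' hN'
    rw [← Finset.sum_range_add_sum_Ico _ hN']
    have h1 : ∑ i ∈ Finset.range N, (if i < N then b i else 0) • e i
        = ∑ i ∈ Finset.range N, b i • e i :=
      Finset.sum_congr rfl fun i hi => by rw [if_pos (Finset.mem_range.mp hi)]
    have h2 : ∑ i ∈ Finset.Ico N N', (if i < N then b i else 0) • e i = 0 :=
      Finset.sum_eq_zero fun i hi => by
        rw [if_neg (by simp at hi; omega), zero_smul]
    rw [h1, h2, add_zero]
  exact Filter.Tendsto.congr' (Filter.eventually_atTop.mpr ⟨N, fun N' h' => (h N' h').symm⟩)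
    tendsto_const_nhds

include huniq hexp in
lemma coef_sub' (v w : Y) : coef (v - w) = fun i => coef v i - coef w i := by
  refine (huniq _ _ ?_).symm
  have := (hexp v).sub (hexp w)
  refine this.congr fun N => ?_
  rw [← Finset.sum_sub_distrib]
  exact Finset.sum_congr rfl fun i _ => by rw [sub_smul]

include huniq hexp in
lemma coef_add' (v w : Y) : coef (v + w) = fun i => coef v i + coef w i := by
  refine (huniq _ _ ?_).symm
  have := (hexp v).add (hexp w)
  refine this.congr fun N => ?_
  rw [← Finset.sum_add_distrib]
  exact Finset.sum_congr rfl fun i _ => by rw [add_smul]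

include huniq hexp in
lemma coef_smul' (c : ℝ) (v : Y) : coef (c • v) = fun i => c * coef v i := by
  refine (huniq _ _ ?_).symm
  have := (hexp v).const_smul c
  refine this.congr fun N => ?_
  rw [Finset.smul_sum]
  exact Finset.sum_congr rfl fun i _ => smul_smul c (coef v i) (e i)

include huniq in
lemma e_ne_zero (i : ℕ) : e i ≠ 0 := by
  intro h0
  have h1 : Filter.Tendsto (fun N => ∑ j ∈ Finset.range N,
      (fun j => if j = i then (1:ℝ) else 0) j • e j) Filter.atTop (nhds 0) := by
    have h : ∀ N, (∑ j ∈ Finset.range N, (fun j => if j = i then (1:ℝ) else 0) j • e j)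
        = 0 := by
      intro N
      refine Finset.sum_eq_zero fun j _ => ?_
      rcases eq_or_ne j i with rfl | hji
      · simp [h0]
      · simp [hji]
    exact Filter.Tendsto.congr (fun N => (h N).symm)
      (tendsto_const_nhds : Filter.Tendsto (fun _ : ℕ => (0:Y)) _ _)
  have h2 : Filter.Tendsto (fun N => ∑ j ∈ Finset.range N, (fun _ => (0:ℝ)) j • e j)
      Filter.atTop (nhds 0) := by
    simpa using (tendsto_const_nhds : Filter.Tendsto (fun _ : ℕ => (0:Y)) _ _)
  have e1 := huniq (fun j => if j = i then (1:ℝ) else 0) 0 h1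
  have e2 := huniq (fun _ => (0:ℝ)) 0 h2
  have h3 := congrFun (e1.trans e2.symm) i
  simp at h3

include hbimono in
lemma abs_coef_le (v : Y) (i : ℕ) : |coef v i| * ‖e i‖ ≤ ‖v‖ := by
  have h := hbimono v i (i + 1)
  rwa [Nat.Ico_succ_singleton, Finset.sum_singleton, norm_smul, Real.norm_eq_abs] at h

end Aux
section Aux2
variable {Y : Type*} [NormedAddCommGroup Y] [NormedSpace ℝ Y] [CompleteSpace Y]
  (e : ℕ → Y) (coef : Y → ℕ → ℝ)
variable
  (hexp : ∀ v : Y, Filter.Tendsto (fun N => ∑ i ∈ Finset.range N, coef v i • e i)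
      Filter.atTop (nhds v))
  (huniq : ∀ (a : ℕ → ℝ) (v : Y),
      Filter.Tendsto (fun N => ∑ i ∈ Finset.range N, a i • e i) Filter.atTop (nhds v) →
        a = coef v)
  (hbimono : ∀ (v : Y) (p q : ℕ), ‖∑ i ∈ Finset.Ico p q, coef v i • e i‖ ≤ ‖v‖)
  (hrefl : Function.Surjective (NormedSpace.inclusionInDoubleDual ℝ Y))

/-- limits of bounded real sequences along ultrafilters -/
lemma exists_ultralim (U : Ultrafilter ℕ) (x : ℕ → ℝ) (C : ℝ)
    (h : ∀ᶠ n in (U : Filter ℕ), |x n| ≤ C) :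
    ∃ c : ℝ, Filter.Tendsto x (U : Filter ℕ) (nhds c) := by
  have hmem : Set.Icc (-C) C ∈ Filter.map x (U : Filter ℕ) := by
    rw [Filter.mem_map]
    filter_upwards [h] with n hn
    exact abs_le.mp hn
  obtain ⟨a, -, ha⟩ := (isCompact_Icc (a := -C) (b := C)).ultrafilter_le_nhds
    (Ultrafilter.map x U) (by rwa [Filter.le_principal_iff, Ultrafilter.coe_map])
  exact ⟨a, by rwa [Ultrafilter.coe_map] at ha⟩

include hbimono huniq in
/-- the coordinate functionals are continuous linear -/
lemma coefCLM_exists (hexp : ∀ v : Y, Filter.Tendsto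
      (fun N => ∑ i ∈ Finset.range N, coef v i • e i) Filter.atTop (nhds v)) (i : ℕ) :
    ∃ ψ : Y →L[ℝ] ℝ, ∀ v, ψ v = coef v i := by
  have hei := e_ne_zero e coef huniq i
  refine ⟨LinearMap.mkContinuous
    { toFun := fun v => coef v i
      map_add' := fun v w => by
        rw [coef_add' e coef hexp huniq v w]
      map_smul' := fun c v => by
        rw [coef_smul' e coef hexp huniq c v]
        rfl }
    (‖e i‖⁻¹) (fun v => ?_), fun v => rfl⟩
  have h := abs_coef_le e coef hbimono v i
  have hpos : 0 < ‖e i‖ := norm_pos_iff.mpr hei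
  rw [Real.norm_eq_abs]
  calc |coef v i| = |coef v i| * ‖e i‖ * ‖e i‖⁻¹ := by
        field_simp
    _ ≤ ‖v‖ * ‖e i‖⁻¹ := by
        apply mul_le_mul_of_nonneg_right h (by positivity)
    _ = ‖e i‖⁻¹ * ‖v‖ := mul_comm _ _

include hexp huniq hbimono hrefl in
/-- bounded completeness of the basis, from reflexivity -/
lemma exists_tendsto_of_bdd (a : ℕ → ℝ) (C : ℝ)
    (hC : ∀ N, ‖∑ i ∈ Finset.range N, a i • e i‖ ≤ C) :
    ∃ g : Y, Filter.Tendsto (fun N => ∑ i ∈ Finset.range N, a i • e i)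
      Filter.atTop (nhds g) := by
  classical
  set s : ℕ → Y := fun N => ∑ i ∈ Finset.range N, a i • e i with hs
  set U : Ultrafilter ℕ := Filter.hyperfilter ℕ with hU
  have hlim : ∀ φ : StrongDual ℝ Y, ∃ c : ℝ,
      Filter.Tendsto (fun N => φ (s N)) (U : Filter ℕ) (nhds c) := by
    intro φ
    refine exists_ultralim U _ (‖φ‖ * C) (Filter.Eventually.of_forall fun N => ?_)
    calc |φ (s N)| = ‖φ (s N)‖ := (Real.norm_eq_abs _).symm
      _ ≤ ‖φ‖ * ‖s N‖ := φ.le_opNorm _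
      _ ≤ ‖φ‖ * C := mul_le_mul_of_nonneg_left (hC N) (norm_nonneg φ)
  choose ℓ hℓ using hlim
  have hadd : ∀ φ ψ : StrongDual ℝ Y, ℓ (φ + ψ) = ℓ φ + ℓ ψ := by
    intro φ ψ
    refine tendsto_nhds_unique (hℓ (φ + ψ)) ?_
    exact ((hℓ φ).add (hℓ ψ)).congr fun N => rfl
  have hsmul : ∀ (c : ℝ) (φ : StrongDual ℝ Y), ℓ (c • φ) = c * ℓ φ := by
    intro c φ
    refine tendsto_nhds_unique (hℓ (c • φ)) ?_
    exact ((hℓ φ).const_mul c).congr fun N => rfl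
  set Φ : StrongDual ℝ Y →ₗ[ℝ] ℝ :=
    { toFun := ℓ, map_add' := hadd, map_smul' := hsmul } with hΦ
  have hΦb : ∀ φ : StrongDual ℝ Y, ‖Φ φ‖ ≤ C * ‖φ‖ := by
    intro φ
    rw [Real.norm_eq_abs]
    have habs : Filter.Tendsto (fun N => |φ (s N)|) (U : Filter ℕ) (nhds |ℓ φ|) :=
      (hℓ φ).abs
    refine le_of_tendsto habs (Filter.Eventually.of_forall fun N => ?_)
    calc |φ (s N)| = ‖φ (s N)‖ := (Real.norm_eq_abs _).symm
      _ ≤ ‖φ‖ * ‖s N‖ := φ.le_opNorm _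
      _ ≤ ‖φ‖ * C := mul_le_mul_of_nonneg_left (hC N) (norm_nonneg φ)
      _ = C * ‖φ‖ := mul_comm _ _
  set Φ' := Φ.mkContinuous C hΦb with hΦ'
  obtain ⟨g, hg⟩ := hrefl Φ'
  have hgval : ∀ φ : StrongDual ℝ Y, φ g = ℓ φ := by
    intro φ
    have := NormedSpace.dual_def ℝ Y g φ
    rw [hg] at this
    exact this.symm
  have hcoef : ∀ i, coef g i = a i := by
    intro i
    obtain ⟨ψ, hψ⟩ := coefCLM_exists e coef huniq hbimono hexp i
    have h1 : Filter.Tendsto (fun N => ψ (s N)) (U : Filter ℕ) (nhds (ℓ ψ)) := hℓ ψ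
    have h2 : Filter.Tendsto (fun N => ψ (s N)) (U : Filter ℕ) (nhds (a i)) := by
      have hev : ∀ᶠ N in (U : Filter ℕ), ψ (s N) = a i := by
        have hmem : {N : ℕ | i < N} ∈ (U : Filter ℕ) := by
          apply Filter.hyperfilter_le_cofinite
          rw [Filter.mem_cofinite]
          have : {N : ℕ | i < N}ᶜ = Set.Iic i := by
            ext N; simp [Set.mem_Iic, not_lt]
          rw [this]; exact Set.finite_Iic i
        filter_upwards [hmem] with N hN
        rw [hψ, hs]
        rw [coef_finsum e coef huniq a N]
        exact if_pos hN
      exact Filter.Tendsto.congr' (Filter.EventuallyEq.symm hev) tendsto_const_nhds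
    have := tendsto_nhds_unique h1 h2
    rw [← hψ g, hgval ψ, this]
  refine ⟨g, ?_⟩
  refine (hexp g).congr fun N => ?_
  exact Finset.sum_congr rfl fun i _ => by rw [hcoef i]

include hexp hbimono in
/-- lower semicontinuity of the norm under coordinatewise convergence -/
lemma norm_limit_le (U : Ultrafilter ℕ) (x : ℕ → Y) (w : Y) (C : ℝ)
    (hcoef : ∀ i, Filter.Tendsto (fun n => coef (x n) i) (U : Filter ℕ) (nhds (coef w i)))
    (hb : ∀ᶠ n in (U : Filter ℕ), ‖x n‖ ≤ C) : ‖w‖ ≤ C := by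
  have hN : ∀ N, ‖∑ i ∈ Finset.range N, coef w i • e i‖ ≤ C := by
    intro N
    have ht : Filter.Tendsto (fun n => ∑ i ∈ Finset.range N, coef (x n) i • e i)
        (U : Filter ℕ) (nhds (∑ i ∈ Finset.range N, coef w i • e i)) :=
      tendsto_finset_sum _ fun i _ => (hcoef i).smul_const (e i)
    refine le_of_tendsto ht.norm ?_
    filter_upwards [hb] with n hn
    calc ‖∑ i ∈ Finset.range N, coef (x n) i • e i‖
        = ‖∑ i ∈ Finset.Ico 0 N, coef (x n) i • e i‖ := by rw [Finset.range_eq_Ico]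
      _ ≤ ‖x n‖ := hbimono (x n) 0 N
      _ ≤ C := hn
  exact le_of_tendsto (hexp w).norm (Filter.Eventually.of_forall hN)

include hexp huniq hbimono hrefl in
/-- coordinatewise (weak) limits of bounded sequences exist, from reflexivity -/
lemma exists_coord_limit (U : Ultrafilter ℕ) (x : ℕ → Y) (C : ℝ)
    (hb : ∀ᶠ n in (U : Filter ℕ), ‖x n‖ ≤ C) :
    ∃ w : Y, ∀ i, Filter.Tendsto (fun n => coef (x n) i) (U : Filter ℕ)
      (nhds (coef w i)) := by
  have h1 : ∀ i, ∃ c : ℝ, Filter.Tendsto (fun n => coef (x n) i) (U : Filter ℕ) (nhds c) := by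
    intro i
    have hei : (0:ℝ) < ‖e i‖ := norm_pos_iff.mpr (e_ne_zero e coef huniq i)
    refine exists_ultralim U _ (‖e i‖⁻¹ * C) ?_
    filter_upwards [hb] with n hn
    have h := abs_coef_le e coef hbimono (x n) i
    calc |coef (x n) i| = |coef (x n) i| * ‖e i‖ * ‖e i‖⁻¹ := by field_simp
      _ ≤ ‖x n‖ * ‖e i‖⁻¹ := mul_le_mul_of_nonneg_right h (by positivity)
      _ ≤ C * ‖e i‖⁻¹ := mul_le_mul_of_nonneg_right hn (by positivity)
      _ = ‖e i‖⁻¹ * C := mul_comm _ _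
  choose a ha using h1
  have hC : ∀ N, ‖∑ i ∈ Finset.range N, a i • e i‖ ≤ C := by
    intro N
    have ht : Filter.Tendsto (fun n => ∑ i ∈ Finset.range N, coef (x n) i • e i)
        (U : Filter ℕ) (nhds (∑ i ∈ Finset.range N, a i • e i)) :=
      tendsto_finset_sum _ fun i _ => (ha i).smul_const (e i)
    refine le_of_tendsto ht.norm ?_
    filter_upwards [hb] with n hn
    calc ‖∑ i ∈ Finset.range N, coef (x n) i • e i‖
        = ‖∑ i ∈ Finset.Ico 0 N, coef (x n) i • e i‖ := by rw [Finset.range_eq_Ico]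
      _ ≤ ‖x n‖ := hbimono (x n) 0 N
      _ ≤ C := hn
  obtain ⟨g, hg⟩ := exists_tendsto_of_bdd e coef hexp huniq hbimono hrefl a C hC
  have hag : a = coef g := huniq a g hg
  exact ⟨g, fun i => by rw [← hag]; exact ha i⟩

end Aux2

section DH
open scoped List

lemma sort_insert_of_lt (m : Finset ℕ) (n : ℕ) (h : ∀ x ∈ m, x < n) :
    (insert n m).sort (· ≤ ·) = m.sort (· ≤ ·) ++ [n] := by
  have hn : n ∉ m := fun hmem => lt_irrefl n (h n hmem)
  refine (fun hp hs => (List.Perm.eq_of_pairwise' hs (Finset.pairwise_sort _ _) hp).symm) ?_ ?_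
  · calc m.sort (· ≤ ·) ++ [n] ~ n :: m.sort (· ≤ ·) := List.perm_append_singleton _ _
      _ ~ n :: m.toList := List.Perm.cons n (Finset.sort_perm_toList m (· ≤ ·))
      _ ~ (insert n m).toList := (Finset.toList_insert hn).symm
      _ ~ (insert n m).sort (· ≤ ·) := (Finset.sort_perm_toList (insert n m) (· ≤ ·)).symm
  · rw [List.pairwise_append]
    refine ⟨Finset.pairwise_sort _ _, List.pairwise_singleton _ _, ?_⟩
    intro a ha b hb
    rw [List.mem_singleton] at hb
    subst hb
    exact le_of_lt (h a ((Finset.mem_sort _).mp ha))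

lemma countP_zip_self (l : List ℕ) : (l.zip l).countP (fun p => p.1 != p.2) = 0 := by
  induction l with
  | nil => rfl
  | cons a l ih => simp [List.zip_cons_cons, List.countP_cons, ih]

lemma card_insert_of_lt {m : Finset ℕ} {n : ℕ} (h : ∀ x ∈ m, x < n) :
    (insert n m).card = m.card + 1 :=
  Finset.card_insert_of_notMem (fun hmem => lt_irrefl n (h n hmem))

lemma dH_insert_insert (m m' : Finset ℕ) (n : ℕ) (h : ∀ x ∈ m, x < n)
    (h' : ∀ x ∈ m', x < n) (hc : m.card = m'.card) :
    dH (insert n m) (insert n m') = dH m m' := by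
  have hlen : (m.sort (· ≤ ·)).length = (m'.sort (· ≤ ·)).length := by
    rw [Finset.length_sort, Finset.length_sort, hc]
  rw [dH, dH, sort_insert_of_lt m n h, sort_insert_of_lt m' n h',
    List.zip_append hlen, List.countP_append, card_insert_of_lt h, card_insert_of_lt h', hc]
  simp [List.countP_cons]

lemma dH_insert_ne (m : Finset ℕ) (n n' : ℕ) (h : ∀ x ∈ m, x < n)
    (h' : ∀ x ∈ m, x < n') (hne : n ≠ n') :
    dH (insert n m) (insert n' m) = 1 := by
  rw [dH, sort_insert_of_lt m n h, sort_insert_of_lt m n' h',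
    List.zip_append rfl, List.countP_append, card_insert_of_lt h, card_insert_of_lt h',
    countP_zip_self]
  have : (n != n') = true := bne_iff_ne.mpr hne
  simp [List.countP_cons, this]

end DH

section Key
variable {Y : Type*} [NormedAddCommGroup Y] [NormedSpace ℝ Y] [CompleteSpace Y]

theorem key_lemma
    (hrefl : Function.Surjective (NormedSpace.inclusionInDoubleDual ℝ Y))
    (e : ℕ → Y) (coef : Y → ℕ → ℝ)
    (hexp : ∀ v : Y, Filter.Tendsto (fun N => ∑ i ∈ Finset.range N, coef v i • e i)
      Filter.atTop (nhds v))
    (huniq : ∀ (a : ℕ → ℝ) (v : Y),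
      Filter.Tendsto (fun N => ∑ i ∈ Finset.range N, a i • e i) Filter.atTop (nhds v) →
        a = coef v)
    (hbimono : ∀ (v : Y) (p q : ℕ), ‖∑ i ∈ Finset.Ico p q, coef v i • e i‖ ≤ ‖v‖)
    (k : ℕ) :
    ∀ (r : ℕ) (U : Ultrafilter ℕ), (U : Filter ℕ) ≤ Filter.cofinite →
    ∀ (M : Set ℕ), M ∈ U →
    ∀ (f : Finset ℕ → Y) (L : ℝ),
    (∀ m n : Finset ℕ, m.card = k → n.card = k → ↑m ⊆ M → ↑n ⊆ M →
      ‖f m - f n‖ ≤ L * dH m n) →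
    ∀ ε : ℝ, 0 < ε →
    ∃ (y : Y) (G : Finset ℕ → Set ℕ), (∀ s, G s ∈ U) ∧
      ∀ m : Finset ℕ, m.card = k → ↑m ⊆ M →
        (∀ a ∈ m, a ∈ G (m.filter (· < a))) →
        ∃ v : Fin k → (ℕ →₀ ℝ),
          (∀ i, ∀ a ∈ (v i).support, r ≤ a) ∧
          (∀ i j : Fin k, i < j → ∀ a ∈ (v i).support, ∀ b ∈ (v j).support, a < b) ∧
          (∀ i, ‖(v i).sum fun j c => c • e j‖ ≤ L) ∧
          ‖f m - (y + ∑ i, (v i).sum fun j c => c • e j)‖ < ε := by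
  classical
  induction k with
  | zero =>
    intro r U hUcof M hMU f L hL ε hε
    refine ⟨f ∅, fun _ => Set.univ, fun _ => Filter.univ_mem, ?_⟩
    intro m hmcard _ _
    have hm : m = ∅ := Finset.card_eq_zero.mp hmcard
    subst hm
    refine ⟨Fin.elim0, fun i => i.elim0, fun i => i.elim0, fun i => i.elim0, ?_⟩
    simp [hε]
  | succ k IH =>
    intro r U hUcof M hMU f L hL ε hε
    -- M is infinite
    have hMinf : M.Infinite := by
      intro hfin
      have h1 : Mᶜ ∈ (U : Filter ℕ) := hUcof hfin.compl_mem_cofinite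
      exact (Ultrafilter.compl_notMem_iff.mpr hMU) h1
    have hIoi : ∀ b : ℕ, Set.Ioi b ∈ (U : Filter ℕ) := by
      intro b
      apply hUcof
      rw [Filter.mem_cofinite, Set.compl_Ioi]
      exact Set.finite_Iic b
    -- `n` large sets
    have hbig : ∀ s : Finset ℕ, {n : ℕ | ∀ x ∈ s, x < n} ∈ (U : Filter ℕ) := by
      intro s
      have hsub : Set.Ioi (s.sup id) ⊆ {n : ℕ | ∀ x ∈ s, x < n} := by
        intro n hn x hx
        exact lt_of_le_of_lt (Finset.le_sup (f := id) hx) hn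
      exact Filter.mem_of_superset (hIoi _) hsub
    -- construction of the weak limit functions g
    have hg0 : ∀ mb : Finset ℕ, ∃ w : Y, (mb.card = k ∧ ↑mb ⊆ M) →
        ∀ i, Filter.Tendsto (fun n => coef (f (insert n mb)) i) (U : Filter ℕ)
          (nhds (coef w i)) := by
      intro mb
      by_cases hcond : mb.card = k ∧ ↑mb ⊆ M
      · obtain ⟨n₀, hn₀M, hn₀⟩ := hMinf.exists_gt (mb.sup id)
        have hn₀' : ∀ x ∈ mb, x < n₀ := fun x hx =>
          lt_of_le_of_lt (Finset.le_sup (f := id) hx) hn₀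
        have hb : ∀ᶠ n in (U : Filter ℕ), ‖f (insert n mb)‖ ≤ ‖f (insert n₀ mb)‖ + L := by
          filter_upwards [hMU, hbig mb, (hUcof (Set.finite_singleton n₀).compl_mem_cofinite :
            ({n₀}ᶜ : Set ℕ) ∈ (U : Filter ℕ))] with n hnM hn hne
          have hne' : n ≠ n₀ := by simpa using hne
          have hdist := hL (insert n mb) (insert n₀ mb)
            (by rw [card_insert_of_lt hn]; rw [hcond.1])
            (by rw [card_insert_of_lt hn₀']; rw [hcond.1])
            (by rw [Finset.coe_insert]; exact Set.insert_subset hnM hcond.2)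
            (by rw [Finset.coe_insert]; exact Set.insert_subset hn₀M hcond.2)
          rw [dH_insert_ne mb n n₀ hn hn₀' hne'] at hdist
          calc ‖f (insert n mb)‖ ≤ ‖f (insert n₀ mb)‖ + ‖f (insert n mb) - f (insert n₀ mb)‖ := by
                have := norm_add_le (f (insert n₀ mb)) (f (insert n mb) - f (insert n₀ mb))
                simpa using this
            _ ≤ ‖f (insert n₀ mb)‖ + L := by
                have : L * ((1:ℕ):ℝ) = L := by norm_num
                rw [this] at hdist
                linarith
        obtain ⟨w, hw⟩ := exists_coord_limit e coef hexp huniq hbimono hrefl U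
          (fun n => f (insert n mb)) _ hb
        exact ⟨w, fun _ => hw⟩
      · exact ⟨0, fun hc => absurd hc hcond⟩
    choose g hgood using hg0
    -- g is L-Lipschitz
    have hgL : ∀ m n : Finset ℕ, m.card = k → n.card = k → ↑m ⊆ M → ↑n ⊆ M →
        ‖g m - g n‖ ≤ L * dH m n := by
      intro mb mb' hc hc' hs hs'
      refine norm_limit_le e coef hexp hbimono U
        (fun n => f (insert n mb) - f (insert n mb')) _ _ ?_ ?_
      · intro i
        have h1 := hgood mb ⟨hc, hs⟩ i
        have h2 := hgood mb' ⟨hc', hs'⟩ i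
        have h3 := h1.sub h2
        have he : ∀ n : ℕ, coef (f (insert n mb)) i - coef (f (insert n mb')) i
            = coef (f (insert n mb) - f (insert n mb')) i := fun n => by
          rw [coef_sub' e coef hexp huniq]
        have he2 : coef (g mb) i - coef (g mb') i = coef (g mb - g mb') i := by
          rw [coef_sub' e coef hexp huniq]
        rw [he2] at h3
        exact h3.congr he
      · filter_upwards [hMU, hbig (mb ∪ mb')] with n hnM hn
        have hnm : ∀ x ∈ mb, x < n := fun x hx => hn x (Finset.mem_union_left _ hx)
        have hnm' : ∀ x ∈ mb', x < n := fun x hx => hn x (Finset.mem_union_right _ hx)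
        have hdist := hL (insert n mb) (insert n mb')
          (by rw [card_insert_of_lt hnm, hc])
          (by rw [card_insert_of_lt hnm', hc'])
          (by rw [Finset.coe_insert]; exact Set.insert_subset hnM hs)
          (by rw [Finset.coe_insert]; exact Set.insert_subset hnM hs')
        rwa [dH_insert_insert mb mb' n hnm hnm' (hc.trans hc'.symm)] at hdist
    -- distance from f to the weak limit
    have hfg : ∀ (mb : Finset ℕ) (n : ℕ), mb.card = k → ↑mb ⊆ M → n ∈ M →
        (∀ x ∈ mb, x < n) → ‖f (insert n mb) - g mb‖ ≤ L := by
      intro mb n hc hs hnM hn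
      refine norm_limit_le e coef hexp hbimono U
        (fun n' => f (insert n mb) - f (insert n' mb)) _ _ ?_ ?_
      · intro i
        have h2 := hgood mb ⟨hc, hs⟩ i
        have h3 := (tendsto_const_nhds (x := coef (f (insert n mb)) i)
          (f := (U : Filter ℕ))).sub h2
        have he2 : coef (f (insert n mb)) i - coef (g mb) i
            = coef (f (insert n mb) - g mb) i := by rw [coef_sub' e coef hexp huniq]
        rw [he2] at h3
        refine h3.congr fun n' => ?_
        rw [coef_sub' e coef hexp huniq]
      · filter_upwards [hMU, hbig mb, (hUcof (Set.finite_singleton n).compl_mem_cofinite :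
          ({n}ᶜ : Set ℕ) ∈ (U : Filter ℕ))] with n' hn'M hn' hne
        have hne' : n ≠ n' := fun h => by simp [h] at hne
        have hdist := hL (insert n mb) (insert n' mb)
          (by rw [card_insert_of_lt hn, hc])
          (by rw [card_insert_of_lt hn', hc])
          (by rw [Finset.coe_insert]; exact Set.insert_subset hnM hs)
          (by rw [Finset.coe_insert]; exact Set.insert_subset hn'M hs)
        rw [dH_insert_ne mb n n' hn hn' hne'] at hdist
        calc ‖f (insert n mb) - f (insert n' mb)‖ ≤ L * ((1:ℕ):ℝ) := hdist
          _ = L := by norm_num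
    -- apply the induction hypothesis to g
    obtain ⟨y, G, hGU, hdec⟩ := IH r U hUcof M hMU g L hgL (ε/2) (half_pos hε)
    -- choose block decompositions for chains
    have hV0 : ∀ mb : Finset ℕ, ∃ v : Fin k → (ℕ →₀ ℝ),
        (mb.card = k ∧ ↑mb ⊆ M ∧ ∀ a ∈ mb, a ∈ G (mb.filter (· < a))) →
        ((∀ i, ∀ a ∈ (v i).support, r ≤ a) ∧
          (∀ i j : Fin k, i < j → ∀ a ∈ (v i).support, ∀ b ∈ (v j).support, a < b) ∧
          (∀ i, ‖(v i).sum fun j c => c • e j‖ ≤ L) ∧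
          ‖g mb - (y + ∑ i, (v i).sum fun j c => c • e j)‖ < ε/2) := by
      intro mb
      by_cases hcond : mb.card = k ∧ ↑mb ⊆ M ∧ ∀ a ∈ mb, a ∈ G (mb.filter (· < a))
      · obtain ⟨v, hv⟩ := hdec mb hcond.1 hcond.2.1 hcond.2.2
        exact ⟨v, fun _ => hv⟩
      · exact ⟨fun _ => 0, fun hc => absurd hc hcond⟩
    choose V hVp using hV0
    -- the level beyond which new blocks live
    set R : Finset ℕ → ℕ :=
      fun mb => max r (1 + Finset.univ.sup fun i : Fin k => (V mb i).support.sup id) with hR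
    have hrR : ∀ mb, r ≤ R mb := fun mb => le_max_left _ _
    have hVR : ∀ mb (i : Fin k), ∀ a ∈ (V mb i).support, a < R mb := by
      intro mb i a ha
      have h1 : a ≤ (V mb i).support.sup id := Finset.le_sup (f := id) ha
      have h2 : (V mb i).support.sup id
          ≤ Finset.univ.sup fun i : Fin k => (V mb i).support.sup id :=
        Finset.le_sup (f := fun i : Fin k => (V mb i).support.sup id) (Finset.mem_univ i)
      have : a < 1 + Finset.univ.sup fun i : Fin k => (V mb i).support.sup id := by omega
      exact lt_of_lt_of_le this (le_max_right _ _)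
    -- head agreement sets
    set A : Finset ℕ → Set ℕ := fun mb => {n : ℕ | n ∈ M ∧ (∀ x ∈ mb, x < n) ∧
      ‖∑ i ∈ Finset.range (R mb), (coef (f (insert n mb)) i - coef (g mb) i) • e i‖ < ε/8}
      with hA
    have hAU : ∀ mb : Finset ℕ, mb.card = k → ↑mb ⊆ M → A mb ∈ (U : Filter ℕ) := by
      intro mb hc hs
      have ht : Filter.Tendsto
          (fun n => ∑ i ∈ Finset.range (R mb), (coef (f (insert n mb)) i - coef (g mb) i) • e i)
          (U : Filter ℕ) (nhds 0) := by
        have : Filter.Tendsto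
            (fun n => ∑ i ∈ Finset.range (R mb), (coef (f (insert n mb)) i - coef (g mb) i) • e i)
            (U : Filter ℕ)
            (nhds (∑ i ∈ Finset.range (R mb), (coef (g mb) i - coef (g mb) i) • e i)) :=
          tendsto_finset_sum _ fun i _ =>
            (((hgood mb ⟨hc, hs⟩ i).sub tendsto_const_nhds).smul_const (e i))
        simpa using this
      have ht' : Filter.Tendsto
          (fun n => ‖∑ i ∈ Finset.range (R mb), (coef (f (insert n mb)) i - coef (g mb) i) • e i‖)
          (U : Filter ℕ) (nhds 0) := by simpa using ht.norm
      have hev := ht'.eventually_lt_const (by positivity : (0:ℝ) < ε/8)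
      filter_upwards [hMU, hbig mb, hev] with n h1 h2 h3
      exact ⟨h1, h2, by simpa using h3⟩
    -- the new good sets
    set G' : Finset ℕ → Set ℕ :=
      fun s => if s.card = k ∧ ↑s ⊆ M then A s ∩ G s else G s with hG'
    have hG'U : ∀ s, G' s ∈ U := by
      intro s
      simp only [hG']
      by_cases hcond : s.card = k ∧ ↑s ⊆ M
      · rw [if_pos hcond]; exact Filter.inter_mem (hAU s hcond.1 hcond.2) (hGU s)
      · rw [if_neg hcond]; exact hGU s
    refine ⟨y, G', hG'U, ?_⟩
    intro m hmcard hmM hchain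
    -- split off the maximum
    have hmne : m.Nonempty := Finset.card_pos.mp (by omega)
    obtain ⟨n, hn⟩ : ∃ x, m.max' hmne = x := ⟨_, rfl⟩
    obtain ⟨mb, hmb⟩ : ∃ s, m.erase n = s := ⟨_, rfl⟩
    have hnm : n ∈ m := hn ▸ m.max'_mem hmne
    have hlemax : ∀ x ∈ m, x ≤ n := fun x hx => hn ▸ m.le_max' x hx
    have hcard' : mb.card = k := by
      rw [← hmb, Finset.card_erase_of_mem hnm, hmcard]
      omega
    have hmbM : ↑mb ⊆ M := by
      rw [← hmb]
      exact Set.Subset.trans (by exact_mod_cast Finset.erase_subset n m) hmM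
    have hlt : ∀ x ∈ mb, x < n := by
      intro x hx
      rw [← hmb] at hx
      have hxm := Finset.mem_of_mem_erase hx
      exact lt_of_le_of_ne (hlemax x hxm) (Finset.ne_of_mem_erase hx)
    have hins : insert n mb = m := by rw [← hmb]; exact Finset.insert_erase hnm
    have hmbm : ∀ x, x ∈ mb ↔ x ∈ m ∧ x ≠ n := by
      intro x
      rw [← hmb, Finset.mem_erase]
      exact ⟨fun ⟨h1, h2⟩ => ⟨h2, h1⟩, fun ⟨h1, h2⟩ => ⟨h2, h1⟩⟩
    have hfilter_n : m.filter (· < n) = mb := by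
      ext x
      rw [Finset.mem_filter, hmbm x]
      constructor
      · exact fun ⟨h1, h2⟩ => ⟨h1, ne_of_lt h2⟩
      · exact fun ⟨h1, h2⟩ => ⟨h1, lt_of_le_of_ne (hlemax x h1) h2⟩
    -- the chain property for mb w.r.t. G
    have hchain' : ∀ a ∈ mb, a ∈ G (mb.filter (· < a)) := by
      intro a ha
      have ham : a ∈ m := ((hmbm a).mp ha).1
      have halt : a < n := hlt a ha
      have hfeq : m.filter (· < a) = mb.filter (· < a) := by
        ext x
        rw [Finset.mem_filter, Finset.mem_filter, hmbm x]
        constructor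
        · rintro ⟨h1, h2⟩
          exact ⟨⟨h1, fun hxn => absurd (hxn ▸ h2) (by omega)⟩, h2⟩
        · rintro ⟨⟨h1, _⟩, h2⟩
          exact ⟨h1, h2⟩
      have hG'A := hchain a ham
      rw [hfeq] at hG'A
      have hcardlt : (mb.filter (· < a)).card ≠ k := by
        have hsub : mb.filter (· < a) ⊆ mb.erase a := by
          intro x hx
          rw [Finset.mem_filter] at hx
          exact Finset.mem_erase.mpr ⟨ne_of_lt hx.2, hx.1⟩
        have h1 : (mb.filter (· < a)).card ≤ (mb.erase a).card := Finset.card_le_card hsub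
        rw [Finset.card_erase_of_mem ha, hcard'] at h1
        have hk1 : 0 < mb.card := Finset.card_pos.mpr ⟨a, ha⟩
        omega
      simp only [hG'] at hG'A
      rw [if_neg (fun hcond => hcardlt hcond.1)] at hG'A
      exact hG'A
    -- n belongs to the head agreement set of mb
    have hnA : n ∈ A mb ∧ n ∈ G mb := by
      have h := hchain n hnm
      rw [hfilter_n] at h
      simp only [hG'] at h
      rw [if_pos ⟨hcard', hmbM⟩] at h
      exact h
    have hnM : n ∈ M := hmM (by exact_mod_cast hnm)
    -- block decomposition for mb
    obtain ⟨hsupp, hord, hnormV, happrox⟩ := hVp mb ⟨hcard', hmbM, hchain'⟩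
    -- the difference vector
    set w : Y := f m - g mb with hw
    have hwL : ‖w‖ ≤ L := by rw [hw, ← hins]; exact hfg mb n hcard' hmbM hnM hlt
    -- pick the tail cutoff
    have htail : ∃ N : ℕ, R mb ≤ N ∧
        ‖w - ∑ i ∈ Finset.range N, coef w i • e i‖ < ε/8 := by
      have h1 : Filter.Tendsto (fun N => w - ∑ i ∈ Finset.range N, coef w i • e i)
          Filter.atTop (nhds 0) := by
        have := (tendsto_const_nhds (x := w) (f := Filter.atTop (α := ℕ))).sub (hexp w)
        simpa using this
      have h1' : Filter.Tendsto (fun N => ‖w - ∑ i ∈ Finset.range N, coef w i • e i‖)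
          Filter.atTop (nhds 0) := by simpa using h1.norm
      have h2 := h1'.eventually_lt_const (by positivity : (0:ℝ) < ε/8)
      have h3 := Filter.eventually_ge_atTop (R mb)
      obtain ⟨N, hN1, hN2⟩ := (h3.and h2).exists
      exact ⟨N, hN1, hN2⟩
    obtain ⟨N, hRN, htailN⟩ := htail
    -- the new block
    set z : ℕ →₀ ℝ := Finsupp.indicator (Finset.Ico (R mb) N) (fun j _ => coef w j) with hz
    have hzsupp : z.support ⊆ Finset.Ico (R mb) N := by
      intro a ha
      exact_mod_cast Finsupp.support_indicator_subset _ _ ha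
    have hzsum : (z.sum fun j c => c • e j) = ∑ j ∈ Finset.Ico (R mb) N, coef w j • e j := by
      rw [Finsupp.sum_of_support_subset z hzsupp _ (fun j _ => zero_smul ℝ (e j))]
      refine Finset.sum_congr rfl fun j hj => ?_
      rw [hz, Finsupp.indicator_of_mem hj]
    -- assemble
    refine ⟨Fin.snoc (V mb) z, ?_, ?_, ?_, ?_⟩
    · intro i
      refine Fin.lastCases ?_ ?_ i
      · rw [Fin.snoc_last]
        intro a ha
        have := hzsupp ha
        rw [Finset.mem_Ico] at this
        exact le_trans (hrR mb) this.1
      · intro i'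
        rw [Fin.snoc_castSucc]
        exact hsupp i'
    · intro i j
      refine Fin.lastCases (motive := fun j => i < j →
          ∀ a ∈ ((Fin.snoc (V mb) z : Fin (k+1) → ℕ →₀ ℝ) i).support,
          ∀ b ∈ ((Fin.snoc (V mb) z : Fin (k+1) → ℕ →₀ ℝ) j).support, a < b) ?_ ?_ j
      · intro hij
        rw [Fin.snoc_last]
        intro a ha b hb
        have hi' : i ≠ Fin.last k := Fin.ne_last_of_lt hij
        obtain ⟨i', rfl⟩ := Fin.exists_castSucc_eq.mpr hi'
        rw [Fin.snoc_castSucc] at ha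
        have h1 := hVR mb i' a ha
        have h2 := (Finset.mem_Ico.mp (hzsupp hb)).1
        omega
      · intro j' hij'
        have hi' : i ≠ Fin.last k := by
          intro h
          rw [h] at hij'
          exact absurd hij' (Fin.not_lt.mpr (Fin.le_last _))
        obtain ⟨i', rfl⟩ := Fin.exists_castSucc_eq.mpr hi'
        rw [Fin.snoc_castSucc, Fin.snoc_castSucc]
        refine hord i' j' ?_
        rwa [Fin.castSucc_lt_castSucc_iff] at hij'
    · intro i
      refine Fin.lastCases ?_ ?_ i
      · rw [Fin.snoc_last, hzsum]
        calc ‖∑ j ∈ Finset.Ico (R mb) N, coef w j • e j‖ ≤ ‖w‖ := hbimono w (R mb) N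
          _ ≤ L := hwL
      · intro i'
        rw [Fin.snoc_castSucc]
        exact hnormV i'
    · -- the approximation estimate
      have hsum : (∑ i : Fin (k+1), ((Fin.snoc (V mb) z : Fin (k+1) → ℕ →₀ ℝ) i).sum
          fun j c => c • e j)
          = (∑ i : Fin k, (V mb i).sum fun j c => c • e j)
            + (z.sum fun j c => c • e j) := by
        rw [Fin.sum_univ_castSucc]
        congr 1
        · exact Finset.sum_congr rfl fun i _ => by rw [Fin.snoc_castSucc]
        · rw [Fin.snoc_last]
      rw [hsum]
      -- decompose the error
      have hdecomp : f m - (y + ((∑ i : Fin k, (V mb i).sum fun j c => c • e j)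
          + z.sum fun j c => c • e j))
          = (g mb - (y + ∑ i : Fin k, (V mb i).sum fun j c => c • e j))
            + (w - z.sum fun j c => c • e j) := by
        rw [hw]; abel
      rw [hdecomp]
      have hsplit : w - (z.sum fun j c => c • e j)
          = (w - ∑ i ∈ Finset.range N, coef w i • e i)
            + ∑ i ∈ Finset.range (R mb), coef w i • e i := by
        rw [hzsum, ← Finset.sum_range_add_sum_Ico (fun i => coef w i • e i) hRN]
        abel
      have hhead : ‖∑ i ∈ Finset.range (R mb), coef w i • e i‖ < ε/8 := by
        have h1 := hnA.1
        rw [hA] at h1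
        have h2 := h1.2.2
        have h3 : ∀ i, coef w i = coef (f (insert n mb)) i - coef (g mb) i := by
          intro i
          rw [hw, ← hins, coef_sub' e coef hexp huniq]
        have h4 : ∑ i ∈ Finset.range (R mb), coef w i • e i
            = ∑ i ∈ Finset.range (R mb),
              (coef (f (insert n mb)) i - coef (g mb) i) • e i :=
          Finset.sum_congr rfl fun i _ => by rw [h3 i]
        rw [h4]
        exact h2
      have herr : ‖w - z.sum fun j c => c • e j‖ < ε/8 + ε/8 := by
        rw [hsplit]
        calc ‖(w - ∑ i ∈ Finset.range N, coef w i • e i)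
            + ∑ i ∈ Finset.range (R mb), coef w i • e i‖
            ≤ ‖w - ∑ i ∈ Finset.range N, coef w i • e i‖
              + ‖∑ i ∈ Finset.range (R mb), coef w i • e i‖ := norm_add_le _ _
          _ < ε/8 + ε/8 := by exact add_lt_add htailN hhead
      calc ‖(g mb - (y + ∑ i : Fin k, (V mb i).sum fun j c => c • e j))
          + (w - z.sum fun j c => c • e j)‖
          ≤ ‖g mb - (y + ∑ i : Fin k, (V mb i).sum fun j c => c • e j)‖
            + ‖w - z.sum fun j c => c • e j‖ := norm_add_le _ _
        _ < ε/2 + (ε/8 + ε/8) := add_lt_add happrox herr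
        _ < ε := by linarith
end Key


/-- Let `Y` be a reflexive Banach space with a bimonotone Schauder basis `(e_i)` (with
coordinate functionals `coef`). For all `k, r ∈ ℕ`, `ε > 0`, every infinite `M ⊆ ℕ`
and every `L`-Lipschitz map `f : ([M]^k, d_H) → Y`, there exist an infinite `M' ⊆ M`
and `y ∈ Y` such that for every `m̄ ∈ [M']^k` there are finitely supported vectors
`y^{(1)}_{m̄} ≺ ⋯ ≺ y^{(k)}_{m̄}` (given by coefficient sequences `v i`) supported
beyond `r`, of norm at most `L`, with `‖f(m̄) − (y + y^{(1)}_{m̄} + ⋯ + y^{(k)}_{m̄})‖ < ε`. -/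
theorem lipschitz_map_approximate_block_decomposition
    {Y : Type*} [NormedAddCommGroup Y] [NormedSpace ℝ Y] [CompleteSpace Y]
    (hrefl : Function.Surjective (NormedSpace.inclusionInDoubleDual ℝ Y))
    (e : ℕ → Y) (coef : Y → ℕ → ℝ)
    (hexp : ∀ v : Y, Filter.Tendsto (fun N => ∑ i ∈ Finset.range N, coef v i • e i)
      Filter.atTop (nhds v))
    (huniq : ∀ (a : ℕ → ℝ) (v : Y),
      Filter.Tendsto (fun N => ∑ i ∈ Finset.range N, a i • e i) Filter.atTop (nhds v) →
        a = coef v)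
    (hbimono : ∀ (v : Y) (p q : ℕ), ‖∑ i ∈ Finset.Ico p q, coef v i • e i‖ ≤ ‖v‖)
    (k r : ℕ) (ε : ℝ) (hε : 0 < ε) (M : Set ℕ) (hM : M.Infinite)
    (f : Finset ℕ → Y) (L : ℝ)
    (hL : ∀ m n : Finset ℕ, m.card = k → n.card = k → ↑m ⊆ M → ↑n ⊆ M →
      ‖f m - f n‖ ≤ L * dH m n) :
    ∃ (M' : Set ℕ) (y : Y), M' ⊆ M ∧ M'.Infinite ∧
      ∀ m : Finset ℕ, m.card = k → ↑m ⊆ M' →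
        ∃ v : Fin k → (ℕ →₀ ℝ),
          (∀ i, ∀ a ∈ (v i).support, r ≤ a) ∧
          (∀ i j : Fin k, i < j → ∀ a ∈ (v i).support, ∀ b ∈ (v j).support, a < b) ∧
          (∀ i, ‖(v i).sum fun j c => c • e j‖ ≤ L) ∧
          ‖f m - (y + ∑ i, (v i).sum fun j c => c • e j)‖ < ε := by
  classical
  -- an ultrafilter containing the cofinite subsets of M
  have hNB : (Filter.cofinite ⊓ Filter.principal M).NeBot := by
    rw [Filter.inf_principal_neBot_iff]
    intro s hs
    rw [Filter.mem_cofinite] at hs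
    obtain ⟨x, hx1, hx2⟩ := (hM.diff hs).nonempty
    exact ⟨x, not_not.mp hx2, hx1⟩
  set U : Ultrafilter ℕ := @Ultrafilter.of ℕ (Filter.cofinite ⊓ Filter.principal M) hNB
    with hU
  have hUle : (U : Filter ℕ) ≤ Filter.cofinite ⊓ Filter.principal M := Ultrafilter.of_le _
  have hUcof : (U : Filter ℕ) ≤ Filter.cofinite := hUle.trans inf_le_left
  have hMU : M ∈ U := hUle (Filter.mem_inf_of_right (Filter.mem_principal_self M))
  obtain ⟨y, G, hGU, hmain⟩ :=
    key_lemma hrefl e coef hexp huniq hbimono k r U hUcof M hMU f L hL ε hε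
  -- the sets of admissible next picks
  set B : Finset ℕ → Set ℕ :=
    fun t => (M ∩ ⋂ s ∈ t.powerset, G s) ∩ ⋂ x ∈ t, Set.Ioi x with hB
  have hBU : ∀ t, B t ∈ U := by
    intro t
    refine Filter.inter_mem (Filter.inter_mem hMU ?_) ?_
    · rw [Filter.biInter_finset_mem]
      exact fun s _ => hGU s
    · rw [Filter.biInter_finset_mem]
      intro x _
      apply hUcof
      rw [Filter.mem_cofinite, Set.compl_Ioi]
      exact Set.finite_Iic x
  have hBne : ∀ t, (B t).Nonempty := fun t => Ultrafilter.nonempty_of_mem (hBU t)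
  choose c hc using hBne
  -- the recursively picked finite sets
  set T : ℕ → Finset ℕ := fun j => Nat.rec ∅ (fun _ t => insert (c t) t) j with hT
  have hT0 : T 0 = ∅ := rfl
  have hTs : ∀ j, T (j + 1) = insert (c (T j)) (T j) := fun j => rfl
  set p : ℕ → ℕ := fun j => c (T j) with hp
  have hgtT : ∀ j, ∀ x ∈ T j, x < p j := by
    intro j x hx
    have h := (hc (T j)).2
    rw [Set.mem_iInter₂] at h
    exact h x hx
  have hpM : ∀ j, p j ∈ M := fun j => (hc (T j)).1.1
  have hpG : ∀ j (s : Finset ℕ), s ⊆ T j → p j ∈ G s := by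
    intro j s hs
    have h := (hc (T j)).1.2
    rw [Set.mem_iInter₂] at h
    exact h s (Finset.mem_powerset.mpr hs)
  have hTmono : ∀ i j, i ≤ j → T i ⊆ T j := by
    intro i j hij
    induction j with
    | zero => rw [Nat.le_zero.mp hij]
    | succ j ih =>
      rcases Nat.lt_or_ge i (j + 1) with h | h
      · refine (ih (by omega)).trans ?_
        rw [hTs j]
        exact Finset.subset_insert _ _
      · rw [Nat.le_antisymm hij h]
  have hpT : ∀ j, p j ∈ T (j + 1) := fun j => by
    rw [hTs j]; exact Finset.mem_insert_self _ _
  have hpmono : StrictMono p := by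
    apply strictMono_nat_of_lt_succ
    intro j
    exact hgtT (j + 1) (p j) (hpT j)
  have hTchar : ∀ j x, x ∈ T j ↔ ∃ i, i < j ∧ x = p i := by
    intro j
    induction j with
    | zero => intro x; simp [hT0]
    | succ j ih =>
      intro x
      rw [hTs j, Finset.mem_insert, ih x]
      constructor
      · rintro (rfl | ⟨i, hi, rfl⟩)
        · exact ⟨j, by omega, rfl⟩
        · exact ⟨i, by omega, rfl⟩
      · rintro ⟨i, hi, rfl⟩
        rcases Nat.lt_or_ge i j with h | h
        · exact Or.inr ⟨i, h, rfl⟩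
        · have : i = j := by omega
          subst this
          exact Or.inl rfl
  refine ⟨Set.range p, y, ?_, Set.infinite_range_of_injective hpmono.injective, ?_⟩
  · rintro _ ⟨j, rfl⟩
    exact hpM j
  · intro m hmcard hmsub
    refine hmain m hmcard (fun x hx => ?_) (fun a ha => ?_)
    · obtain ⟨j, rfl⟩ := hmsub hx
      exact hpM j
    · obtain ⟨j, hj⟩ := hmsub ha
      have hsub : m.filter (· < a) ⊆ T j := by
        intro x hx
        rw [Finset.mem_filter] at hx
        obtain ⟨i, hi⟩ := hmsub hx.1
        have hij : i < j := by
          rw [← hpmono.lt_iff_lt]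
          rw [hi, hj]
          exact hx.2
        rw [hTchar j]
        exact ⟨i, hij, hi.symm⟩
      have h5 := hpG j _ hsub
      rw [hj] at h5
      exact h5
end AuxA
end

section
/- Let Y be a Banach space with the property that for every k and every 1-Lipschitz map f : ([ℕ]^k, d_H) → Y there exists an infinite M ⊂ ℕ with ‖f(m̄) − f(n̄)‖ ≤ C for all m̄, n̄ ∈ [M]^k (C a fixed constant). Then the Hamming graphs (H_k^ω)_{k≥1} = ([ℕ]^k, d_H)_{k≥1} do not equi-coarsely embed into Y. -/
open List
lemma zipCount_comm (a b : List ℕ) :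
    (a.zip b).countP (fun p => p.1 != p.2) = (b.zip a).countP (fun p => p.1 != p.2) := by
  induction a generalizing b with
  | nil => cases b <;> simp
  | cons x a ih =>
    cases b with
    | nil => simp
    | cons y b =>
      simp only [zip_cons_cons, countP_cons, ih b]
      congr 1
      by_cases h : x = y
      · simp [h]
      · simp [h, Ne.symm h]

lemma zipCount_self (a : List ℕ) : (a.zip a).countP (fun p => p.1 != p.2) = 0 := by
  induction a with
  | nil => simp
  | cons x a ih => simpa [List.countP_cons] using ih

lemma zipCount_eq_zero {a b : List ℕ} (hl : a.length = b.length)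
    (h : (a.zip b).countP (fun p => p.1 != p.2) = 0) : a = b := by
  induction a generalizing b with
  | nil => cases b with | nil => rfl | cons y b => simp at hl
  | cons x a ih =>
    cases b with
    | nil => simp at hl
    | cons y b =>
      simp only [zip_cons_cons, countP_cons, Nat.add_eq_zero] at h
      have hxy : x = y := by
        by_contra hne
        simp [hne] at h
      simp only [length_cons, Nat.add_right_cancel_iff] at hl
      rw [hxy, ih hl h.1]

lemma zipCount_set (a : List ℕ) (i : ℕ) (x : ℕ) (h : i < a.length) :
    (a.zip (a.set i x)).countP (fun p => p.1 != p.2)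
      = if a[i] = x then 0 else 1 := by
  induction a generalizing i with
  | nil => simp at h
  | cons y a ih =>
    cases i with
    | zero =>
      simp only [List.set_cons_zero, zip_cons_cons, countP_cons, getElem_cons_zero]
      rw [zipCount_self]
      by_cases hyx : y = x <;> simp [hyx]
    | succ i =>
      simp only [List.set_cons_succ, zip_cons_cons, countP_cons, getElem_cons_succ]
      rw [ih i (by simpa using h)]
      simp

lemma zipCount_set_left {a b : List ℕ} (i : ℕ) (hl : a.length = b.length)
    (ha : i < a.length) (hb : i < b.length) (hne : a[i] ≠ b[i]) :
    ((a.set i b[i]).zip b).countP (fun p => p.1 != p.2) + 1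
      = (a.zip b).countP (fun p => p.1 != p.2) := by
  induction a generalizing b i with
  | nil => simp at ha
  | cons x a ih =>
    cases b with
    | nil => simp at hb
    | cons y b =>
      cases i with
      | zero =>
        simp only [getElem_cons_zero] at hne ⊢
        simp [List.set_cons_zero, countP_cons, hne]
      | succ i =>
        simp only [getElem_cons_succ] at hne ⊢
        simp only [List.set_cons_succ, zip_cons_cons, countP_cons]
        rw [← ih i (by simpa using hl) (by simpa using ha) (by simpa using hb) hne]
        omega

lemma set_sorted_lt {a : List ℕ} (ha : a.Pairwise (· < ·)) {i : ℕ} (hi : i < a.length) {x : ℕ}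
    (hlo : ∀ j (hj : j < a.length), j < i → a[j] < x)
    (hhi : ∀ j (hj : j < a.length), i < j → x < a[j]) :
    (a.set i x).Pairwise (· < ·) := by
  rw [pairwise_iff_getElem] at ha ⊢
  intro p q hp hq hpq
  simp only [List.length_set] at hp hq
  rw [List.getElem_set, List.getElem_set]
  rcases eq_or_ne i p with rfl | hip
  · rw [if_pos rfl, if_neg (by omega)]
    exact hhi q hq hpq
  · rw [if_neg hip]
    rcases eq_or_ne i q with rfl | hiq
    · rw [if_pos rfl]
      exact hlo p hp hpq
    · rw [if_neg hiq]
      exact ha p q hp hq hpq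


lemma dH_card_eq {m n : Finset ℕ} (h : m.card = n.card) :
    dH m n = ((m.sort (· ≤ ·)).zip (n.sort (· ≤ ·))).countP (fun p => p.1 != p.2) := by
  simp [dH, h]

lemma dH_step {k d : ℕ} {m n : Finset ℕ} (hm : m.card = k) (hn : n.card = k)
    (hd : dH m n = d + 1) :
    (∃ p : Finset ℕ, p.card = k ∧ dH m p = 1 ∧ dH p n = d) ∨
    (∃ p : Finset ℕ, p.card = k ∧ dH m p = d ∧ dH p n = 1) := by
  set a := m.sort (· ≤ ·) with haa
  set b := n.sort (· ≤ ·) with hbb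
  have hal : a.length = k := by rw [haa, Finset.length_sort, hm]
  have hbl : b.length = k := by rw [hbb, Finset.length_sort, hn]
  have hcount : (a.zip b).countP (fun p => p.1 != p.2) = d + 1 := by
    rw [← dH_card_eq (hm.trans hn.symm)]; exact hd
  have hsa : a.Pairwise (· < ·) := (Finset.sortedLT_sort m).pairwise
  have hsb : b.Pairwise (· < ·) := (Finset.sortedLT_sort n).pairwise
  -- find a differing index
  set P : ℕ → Prop := fun j => a.getD j 0 ≠ b.getD j 0 with hP
  have hex : ∃ j, j < k ∧ P j := by
    by_contra hno
    push_neg at hno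
    have : a = b := by
      apply List.ext_getElem (hal.trans hbl.symm)
      intro j h1 h2
      have h3 := hno j (by omega)
      simp only [hP, not_not] at h3
      rwa [List.getD_eq_getElem _ _ h1, List.getD_eq_getElem _ _ h2] at h3
    rw [this, zipCount_self] at hcount
    omega
  obtain ⟨j0, hj0k, hj0⟩ := hex
  set i := Nat.findGreatest P k with hi
  have hPi : P i := Nat.findGreatest_spec (m := j0) (by omega) hj0
  have hik : i < k := by
    rcases Nat.lt_or_ge i k with h | h
    · exact h
    · exfalso
      have hik' : i ≤ k := Nat.findGreatest_le k
      have : i = k := le_antisymm hik' h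
      rw [hP] at hPi
      rw [this] at hPi
      rw [List.getD_eq_default _ _ (by omega), List.getD_eq_default _ _ (by omega)] at hPi
      exact hPi rfl
  have hia : i < a.length := by omega
  have hib : i < b.length := by omega
  have hne : a[i] ≠ b[i] := by
    rw [hP, List.getD_eq_getElem _ _ hia, List.getD_eq_getElem _ _ hib] at hPi
    exact hPi
  have hmax : ∀ j (h1 : j < a.length) (h2 : j < b.length), i < j → a[j] = b[j] := by
    intro j h1 h2 hij
    have h3 := Nat.findGreatest_is_greatest (k := j) (n := k) hij (by omega)
    simp only [hP, List.getD_eq_getElem _ _ h1, List.getD_eq_getElem _ _ h2, not_not] at h3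
    exact h3
  have hpa := pairwise_iff_getElem.mp hsa
  have hpb := pairwise_iff_getElem.mp hsb
  rcases Nat.lt_or_ge a[i] b[i] with hab | hab
  · -- replace a[i] by b[i]
    left
    set c := a.set i b[i] with hc
    have hcl : c.length = k := by rw [hc, List.length_set, hal]
    have hcs : c.Pairwise (· < ·) := by
      apply set_sorted_lt hsa hia
      · intro j hj hji
        exact lt_trans (hpa j i hj hia hji) hab
      · intro j hj hij
        rw [hmax j hj (by omega) hij]
        exact hpb i j hib (by omega) hij
    have hcnd : c.Nodup := hcs.nodup
    refine ⟨c.toFinset, ?_, ?_, ?_⟩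
    · rw [List.toFinset_card_of_nodup hcnd, hcl]
    · have hsort : c.toFinset.sort (· ≤ ·) = c :=
        (List.toFinset_sort _ hcnd).mpr (hcs.imp le_of_lt)
      rw [dH_card_eq (by rw [hm, List.toFinset_card_of_nodup hcnd, hcl]), hsort, ← haa]
      rw [hc, zipCount_set a i _ hia, if_neg hne]
    · have hsort : c.toFinset.sort (· ≤ ·) = c :=
        (List.toFinset_sort _ hcnd).mpr (hcs.imp le_of_lt)
      rw [dH_card_eq (by rw [hn, List.toFinset_card_of_nodup hcnd, hcl]), hsort, ← hbb]
      have := zipCount_set_left i (hal.trans hbl.symm) hia hib hne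
      rw [← hc] at this
      omega
  · -- replace b[i] by a[i]
    right
    have hab' : b[i] < a[i] := lt_of_le_of_ne hab (Ne.symm hne)
    set c := b.set i a[i] with hc
    have hcl : c.length = k := by rw [hc, List.length_set, hbl]
    have hcs : c.Pairwise (· < ·) := by
      apply set_sorted_lt hsb hib
      · intro j hj hji
        exact lt_trans (hpb j i hj hib hji) hab'
      · intro j hj hij
        rw [← hmax j (by omega) hj hij]
        exact hpa i j hia (by omega) hij
    have hcnd : c.Nodup := hcs.nodup
    have hsort : c.toFinset.sort (· ≤ ·) = c :=
      (List.toFinset_sort _ hcnd).mpr (hcs.imp le_of_lt)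
    refine ⟨c.toFinset, ?_, ?_, ?_⟩
    · rw [List.toFinset_card_of_nodup hcnd, hcl]
    · rw [dH_card_eq (by rw [hm, List.toFinset_card_of_nodup hcnd, hcl]), hsort, ← haa]
      rw [zipCount_comm]
      have := zipCount_set_left i (hbl.trans hal.symm) hib hia (Ne.symm hne)
      rw [← hc] at this
      rw [zipCount_comm b a, hcount] at this
      omega
    · rw [dH_card_eq (by rw [hn, List.toFinset_card_of_nodup hcnd, hcl]), hsort, ← hbb]
      rw [zipCount_comm, hc, zipCount_set b i _ hib, if_neg (Ne.symm hne)]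

lemma dH_self (m : Finset ℕ) : dH m m = 0 := by
  simp [dH, zipCount_self]

lemma dH_eq_zero {m n : Finset ℕ} (h : m.card = n.card) (hd : dH m n = 0) : m = n := by
  rw [dH_card_eq h] at hd
  have := zipCount_eq_zero (by simp [h]) hd
  rw [← Finset.sort_toFinset m (· ≤ ·), ← Finset.sort_toFinset n (· ≤ ·), this]

lemma dH_disjoint {k : ℕ} {m n : Finset ℕ} (hm : m.card = k) (hn : n.card = k)
    (hd : Disjoint m n) : dH m n = k := by
  rw [dH_card_eq (hm.trans hn.symm)]
  have hlen : ((m.sort (· ≤ ·)).zip (n.sort (· ≤ ·))).length = k := by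
    simp [List.length_zip, hm, hn]
  rw [← hlen]
  rw [List.countP_eq_length]
  rintro ⟨x, y⟩ hp
  obtain ⟨hx, hy⟩ := List.of_mem_zip hp
  rw [Finset.mem_sort] at hx hy
  have : x ≠ y := fun h => Finset.disjoint_left.mp hd hx (h ▸ hy)
  simpa using this

section Lip
variable {Y : Type*} [NormedAddCommGroup Y]

lemma lip_of_adj {k : ℕ} (f : Finset ℕ → Y) (L : ℝ) (hL : 0 ≤ L)
    (hf : ∀ m n : Finset ℕ, m.card = k → n.card = k → dH m n = 1 → ‖f m - f n‖ ≤ L) :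
    ∀ (d : ℕ) (m n : Finset ℕ), m.card = k → n.card = k → dH m n = d →
      ‖f m - f n‖ ≤ L * d := by
  intro d
  induction d with
  | zero =>
    intro m n hm hn hd
    rw [dH_eq_zero (hm.trans hn.symm) hd]
    simp
  | succ d ih =>
    intro m n hm hn hd
    rcases dH_step hm hn hd with ⟨p, hp, h1, h2⟩ | ⟨p, hp, h1, h2⟩
    · calc ‖f m - f n‖ ≤ ‖f m - f p‖ + ‖f p - f n‖ := norm_sub_le_norm_sub_add_norm_sub _ _ _
        _ ≤ L + L * d := add_le_add (hf m p hm hp h1) (ih p n hp hn h2)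
        _ = L * (d + 1 : ℕ) := by push_cast; ring
    · calc ‖f m - f n‖ ≤ ‖f m - f p‖ + ‖f p - f n‖ := norm_sub_le_norm_sub_add_norm_sub _ _ _
        _ ≤ L * d + L := add_le_add (ih m p hm hp h1) (hf p n hp hn h2)
        _ = L * (d + 1 : ℕ) := by push_cast; ring

end Lip


/-- If `Y` has the property that every `1`-Lipschitz map `f : ([ℕ]^k, d_H) → Y`
concentrates on `[M]^k` for some infinite `M` (oscillation at most a fixed constant
`C`), then the Hamming graphs `(H_k^ω)_{k ≥ 1}` do not equi-coarsely embed into `Y`. -/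
theorem concentration_implies_no_equi_coarse_hamming
    {Y : Type*} [NormedAddCommGroup Y] [NormedSpace ℝ Y] (C : ℝ)
    (hC : ∀ (k : ℕ) (f : Finset ℕ → Y),
      (∀ m n : Finset ℕ, m.card = k → n.card = k → ‖f m - f n‖ ≤ dH m n) →
      ∃ M : Set ℕ, M.Infinite ∧
        ∀ m n : Finset ℕ, m.card = k → n.card = k → ↑m ⊆ M → ↑n ⊆ M →
          ‖f m - f n‖ ≤ C) :
    ¬ ∃ (ρ ω : ℝ → ℝ) (f : ℕ → Finset ℕ → Y),
        Monotone ρ ∧ Monotone ω ∧ Filter.Tendsto ρ Filter.atTop Filter.atTop ∧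
        ∀ (k : ℕ) (m n : Finset ℕ), m.card = k → n.card = k →
          ρ (dH m n) ≤ ‖f k m - f k n‖ ∧ ‖f k m - f k n‖ ≤ ω (dH m n) := by
  rintro ⟨ρ, ω, f, hρm, hωm, hρt, hub⟩
  -- ω 1 is nonnegative
  have hω1 : (0:ℝ) ≤ ω 1 := by
    have h0 := (hub 0 ∅ ∅ rfl rfl).2
    rw [dH_self] at h0
    have := (norm_nonneg (f 0 ∅ - f 0 ∅)).trans h0
    calc (0:ℝ) ≤ ω ((0:ℕ):ℝ) := this
      _ ≤ ω 1 := hωm (by norm_num)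
  set L : ℝ := ω 1 with hLdef
  set c : ℝ := max L 1 with hcdef
  have hc1 : (1:ℝ) ≤ c := le_max_right _ _
  have hc0 : (0:ℝ) < c := lt_of_lt_of_le one_pos hc1
  have hLc : L ≤ c := le_max_left _ _
  -- pick k with ρ k large
  obtain ⟨x0, hx0⟩ := (Filter.tendsto_atTop.mp hρt (c * C + 1)).exists_forall_of_atTop
  obtain ⟨k, hk⟩ := exists_nat_ge x0
  have hρk : c * C + 1 ≤ ρ k := hx0 k hk
  set g : Finset ℕ → Y := fun s => c⁻¹ • f k s with hgdef
  have hnorm : ∀ m n : Finset ℕ, ‖g m - g n‖ = c⁻¹ * ‖f k m - f k n‖ := by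
    intro m n
    rw [hgdef]
    rw [← smul_sub, norm_smul, Real.norm_eq_abs, abs_of_pos (inv_pos.mpr hc0)]
  have hlip := lip_of_adj (f := f k) (L := L) hω1 (by
    intro m n hm hn hd
    have h2 := (hub k m n hm hn).2
    rw [hd] at h2
    simpa using h2)
  have hg : ∀ m n : Finset ℕ, m.card = k → n.card = k → ‖g m - g n‖ ≤ dH m n := by
    intro m n hm hn
    rw [hnorm]
    have h1 := hlip (dH m n) m n hm hn rfl
    have h2 : c⁻¹ * ‖f k m - f k n‖ ≤ c⁻¹ * (L * (dH m n : ℝ)) :=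
      mul_le_mul_of_nonneg_left h1 (le_of_lt (inv_pos.mpr hc0))
    refine h2.trans ?_
    have h3 : L * (dH m n : ℝ) ≤ c * (dH m n : ℝ) :=
      mul_le_mul_of_nonneg_right hLc (Nat.cast_nonneg _)
    calc c⁻¹ * (L * (dH m n : ℝ)) ≤ c⁻¹ * (c * (dH m n : ℝ)) :=
          mul_le_mul_of_nonneg_left h3 (le_of_lt (inv_pos.mpr hc0))
      _ = (dH m n : ℝ) := by field_simp
  obtain ⟨M, hMinf, hMconc⟩ := hC k g hg
  obtain ⟨m, hmM, hmcard⟩ := hMinf.exists_subset_card_eq k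
  obtain ⟨n, hnM', hncard⟩ := (hMinf.diff (m.finite_toSet)).exists_subset_card_eq k
  have hnM : ↑n ⊆ M := hnM'.trans Set.diff_subset
  have hdisj : Disjoint m n := by
    rw [Finset.disjoint_left]
    intro x hxm hxn
    exact (hnM' hxn).2 hxm
  have hdmn : dH m n = k := dH_disjoint hmcard hncard hdisj
  have hcc : ‖g m - g n‖ ≤ C := hMconc m n hmcard hncard hmM hnM
  have hfk : ‖f k m - f k n‖ ≤ c * C := by
    have he : ‖f k m - f k n‖ = c * ‖g m - g n‖ := by
      rw [hnorm]; field_simp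
    rw [he]
    exact mul_le_mul_of_nonneg_left hcc (le_of_lt hc0)
  have hlow := (hub k m n hmcard hncard).1
  rw [hdmn] at hlow
  linarith
end

section
/- Let X be a Banach space containing a sequence (x_n) in the unit ball such that for all k and all n_1 < ... < n_{2k}, ‖Σ_{i=1}^k x_{n_i} − Σ_{i=k+1}^{2k} x_{n_i}‖ ≥ k/2. Then the maps φ_k : ([ℕ]^k, d_H) → X, φ_k(n̄) = Σ_{i=1}^k x_{n_i}, are 2-Lipschitz, and for m̄, n̄ ∈ [M]^k with max(m̄) < min(n̄) one has ‖φ_k(m̄) − φ_k(n̄)‖ ≥ k/2. -/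
private lemma sum_map_sort {X : Type*} [AddCommMonoid X] (m : Finset ℕ) (f : ℕ → X) :
    ((m.sort (· ≤ ·)).map f).sum = ∑ j ∈ m, f j := by
  rw [Finset.sum, ← Finset.sort_eq (r := (· ≤ ·)) (s := m), Multiset.map_coe, Multiset.sum_coe]

private lemma sum_sub_zip {X : Type*} [AddCommGroup X] (x : ℕ → X) :
    ∀ (L K : List ℕ), L.length = K.length →
      (L.map x).sum - (K.map x).sum = ((L.zip K).map (fun p => x p.1 - x p.2)).sum := by
  intro L
  induction L with
  | nil => intro K hK; cases K with
    | nil => simp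
    | cons b K' => simp at hK
  | cons a L' ih =>
    intro K hK
    cases K with
    | nil => simp at hK
    | cons b K' =>
      simp only [List.length_cons, Nat.succ.injEq] at hK
      simp only [List.map_cons, List.sum_cons, List.zip_cons_cons, ← ih K' hK]
      abel

private lemma norm_zip_sum_le {X : Type*} [NormedAddCommGroup X] (x : ℕ → X)
    (hx : ∀ n, ‖x n‖ ≤ 1) :
    ∀ l : List (ℕ × ℕ),
      ‖(l.map (fun p => x p.1 - x p.2)).sum‖ ≤ 2 * (l.countP (fun p => p.1 != p.2) : ℝ) := by
  intro l
  induction l with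
  | nil => simp
  | cons p l' ih =>
    simp only [List.map_cons, List.sum_cons, List.countP_cons]
    by_cases hp : p.1 = p.2
    · have : (p.1 != p.2) = false := by simp [hp]
      rw [this]
      simp only [Bool.false_eq_true, if_false, Nat.add_zero, hp, sub_self, zero_add]
      exact ih
    · have : (p.1 != p.2) = true := by simp [hp]
      rw [this]
      simp only [if_true, Nat.cast_add, Nat.cast_one]
      calc ‖(x p.1 - x p.2) + (l'.map (fun p => x p.1 - x p.2)).sum‖
          ≤ ‖x p.1 - x p.2‖ + ‖(l'.map (fun p => x p.1 - x p.2)).sum‖ := norm_add_le _ _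
        _ ≤ 2 + 2 * (l'.countP (fun p => p.1 != p.2) : ℝ) := by
            refine add_le_add ?_ ih
            calc ‖x p.1 - x p.2‖ ≤ ‖x p.1‖ + ‖x p.2‖ := norm_sub_le _ _
              _ ≤ 1 + 1 := add_le_add (hx _) (hx _)
              _ = 2 := by norm_num
        _ = 2 * ((l'.countP (fun p => p.1 != p.2) : ℝ) + 1) := by ring

/-- If `(x_n)` is a sequence in the unit ball of `X` with
`‖∑_{i=1}^k x_{n_i} − ∑_{i=k+1}^{2k} x_{n_i}‖ ≥ k/2` for all `n_1 < ⋯ < n_{2k}`, then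
the maps `φ_k : ([ℕ]^k, d_H) → X`, `φ_k(n̄) = ∑ x_{n_i}`, are `2`-Lipschitz and for
`m̄, n̄ ∈ [ℕ]^k` with `max m̄ < min n̄` one has `‖φ_k(m̄) − φ_k(n̄)‖ ≥ k/2`. -/
theorem james_sequence_hamming_maps
    {X : Type*} [NormedAddCommGroup X] [NormedSpace ℝ X]
    (x : ℕ → X) (hx : ∀ n, ‖x n‖ ≤ 1)
    (hJ : ∀ (k : ℕ) (n : Fin (2 * k) → ℕ), StrictMono n →
      (k : ℝ) / 2 ≤ ‖(∑ i : Fin (2 * k), if (i : ℕ) < k then x (n i) else 0) -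
        ∑ i : Fin (2 * k), if (i : ℕ) < k then 0 else x (n i)‖) :
    (∀ (k : ℕ) (m n : Finset ℕ), m.card = k → n.card = k →
      ‖(∑ j ∈ m, x j) - ∑ j ∈ n, x j‖ ≤ 2 * dH m n) ∧
    (∀ (k : ℕ) (m n : Finset ℕ), m.card = k → n.card = k →
      (∀ a ∈ m, ∀ b ∈ n, a < b) →
      (k : ℝ) / 2 ≤ ‖(∑ j ∈ m, x j) - ∑ j ∈ n, x j‖) := by
  constructor
  · -- Lipschitz part
    intro k m n hm hn
    have hlen : (m.sort (· ≤ ·)).length = (n.sort (· ≤ ·)).length := by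
      rw [Finset.length_sort, Finset.length_sort, hm, hn]
    have h1 : (∑ j ∈ m, x j) - ∑ j ∈ n, x j =
        (((m.sort (· ≤ ·)).zip (n.sort (· ≤ ·))).map (fun p => x p.1 - x p.2)).sum := by
      rw [← sum_map_sort m x, ← sum_map_sort n x]
      exact sum_sub_zip x _ _ hlen
    rw [h1]
    have h2 := norm_zip_sum_le x hx (((m.sort (· ≤ ·)).zip (n.sort (· ≤ ·))))
    have h3 : (dH m n : ℝ) =
        (((m.sort (· ≤ ·)).zip (n.sort (· ≤ ·))).countP (fun p => p.1 != p.2) : ℝ) := by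
      unfold dH
      rw [hm, hn]
      simp
    rw [h3]
    exact h2
  · -- separation part
    intro k m n hm hn hlt
    -- construct the strictly monotone enumeration
    set em := m.orderEmbOfFin hm with hem
    set en := n.orderEmbOfFin hn with hen
    set f : Fin (2 * k) → ℕ := fun i =>
      if h : (i : ℕ) < k then em ⟨i, h⟩ else en ⟨(i : ℕ) - k, by omega⟩ with hf
    have hmono : StrictMono f := by
      intro i j hij
      simp only [hf]
      by_cases hi : (i : ℕ) < k
      · by_cases hj : (j : ℕ) < k
        · rw [dif_pos hi, dif_pos hj]
          exact em.strictMono (show (⟨(i : ℕ), hi⟩ : Fin k) < ⟨(j : ℕ), hj⟩ from hij)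
        · rw [dif_pos hi, dif_neg hj]
          exact hlt _ (Finset.orderEmbOfFin_mem m hm _) _ (Finset.orderEmbOfFin_mem n hn _)
      · have hj : ¬ (j : ℕ) < k := by
          have : (i : ℕ) < (j : ℕ) := hij
          omega
        rw [dif_neg hi, dif_neg hj]
        refine en.strictMono ?_
        have : (i : ℕ) < (j : ℕ) := hij
        show (i : ℕ) - k < (j : ℕ) - k
        omega
    have key := hJ k f hmono
    have hsum1 : (∑ i : Fin (2 * k), if (i : ℕ) < k then x (f i) else 0) = ∑ j ∈ m, x j := by
      rw [← Finset.sum_filter]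
      have : ∑ i : Fin k, x (em i) = ∑ j ∈ m, x j := by
        rw [← Finset.sum_attach m (fun j => x j)]
        exact Fintype.sum_equiv (m.orderIsoOfFin hm).toEquiv _ _ (fun i => by
          simp [hem, Finset.coe_orderIsoOfFin_apply])
      rw [← this]
      refine Finset.sum_nbij' (fun i => (⟨(i : ℕ) % k, Nat.mod_lt _ (by have := i.isLt; omega)⟩ : Fin k))
        (fun i => (⟨(i : ℕ), by have := i.isLt; omega⟩ : Fin (2 * k))) ?_ ?_ ?_ ?_ ?_
      · intro a _; exact Finset.mem_univ _
      · intro a ha; simp [Nat.lt_of_lt_of_le a.isLt (le_refl k) |>.trans_le (le_refl k), a.isLt]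
      · intro a ha
        simp only [Finset.mem_filter] at ha
        exact Fin.ext (by simp [Nat.mod_eq_of_lt ha.2])
      · intro a _; exact Fin.ext (by simp [Nat.mod_eq_of_lt a.isLt])
      · intro a ha
        simp only [Finset.mem_filter] at ha
        simp only [hf, dif_pos ha.2]
        congr 1
        exact congrArg em (Fin.ext (by simp [Nat.mod_eq_of_lt ha.2]))
    have hsum2 : (∑ i : Fin (2 * k), if (i : ℕ) < k then 0 else x (f i)) = ∑ j ∈ n, x j := by
      have hrw : (∑ i : Fin (2 * k), if (i : ℕ) < k then 0 else x (f i)) =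
          ∑ i ∈ Finset.univ.filter (fun i : Fin (2 * k) => ¬ (i : ℕ) < k), x (f i) := by
        rw [Finset.sum_filter]
        refine Finset.sum_congr rfl (fun i _ => ?_)
        by_cases h : (i : ℕ) < k <;> simp [h]
      rw [hrw]
      have : ∑ i : Fin k, x (en i) = ∑ j ∈ n, x j := by
        rw [← Finset.sum_attach n (fun j => x j)]
        exact Fintype.sum_equiv (n.orderIsoOfFin hn).toEquiv _ _ (fun i => by
          simp [hen, Finset.coe_orderIsoOfFin_apply])
      rw [← this]
      refine Finset.sum_nbij' (fun i => (⟨((i : ℕ) - k) % k, Nat.mod_lt _ (by have := i.isLt; omega)⟩ : Fin k))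
        (fun i => (⟨(i : ℕ) + k, by have := i.isLt; omega⟩ : Fin (2 * k))) ?_ ?_ ?_ ?_ ?_
      · intro a _; exact Finset.mem_univ _
      · intro a _
        simp only [Finset.mem_filter, Finset.mem_univ, true_and]
        omega
      · intro a ha
        simp only [Finset.mem_filter] at ha
        apply Fin.ext
        have h2 : (a : ℕ) < 2 * k := a.isLt
        have h3 : ¬ (a : ℕ) < k := ha.2
        simp only
        rw [Nat.mod_eq_of_lt (by omega)]
        omega
      · intro a _
        apply Fin.ext
        have := a.isLt
        simp only
        rw [Nat.add_sub_cancel, Nat.mod_eq_of_lt this]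
      · intro a ha
        simp only [Finset.mem_filter] at ha
        simp only [hf, dif_neg ha.2]
        have h2 : (a : ℕ) < 2 * k := a.isLt
        have h3 : ¬ (a : ℕ) < k := ha.2
        congr 1
        exact congrArg en (Fin.ext (by simp only; rw [Nat.mod_eq_of_lt (by omega)]))
    rw [hsum1, hsum2] at key
    exact key
end
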